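/- (Lemma: joint recursion for Ξ, ℰ, 𝒟) Define t = 2β²p/(1−β²) + 4 and A = 648/(1 − p/t − 2β²/(1+β²)) (so t ≥ 4 and A > 0). Under the lower-bound, mixing, smoothness, and bounded-variance assumptions, if η ≤ p/(8L√(324 + 2Aβ²/(1−β²))), then for every r ≥ 0: Ξ^{(r+1)} + (36/p²)η² ℰ^{(r+1)} + (Aβ²/p³)η² 𝒟^{(r+1)} ≤ (1 − p/t)(Ξ^{(r)} + (36/p²)η² ℰ^{(r)} + (Aβ²/p³)η² 𝒟^{(r)}) + (1/p)η² E‖∇f(x̄^{(r)})‖² + (1/(Np))(9 + 864/p²)η² E‖U^{(r+1)} − D^{(r+1)}‖_F² + (L²/p³)(2592β² + 16Aβ⁴/(1−β²))η⁴ E‖ū^{(r)}‖² + (9/(Np))η² E‖E^{(r+1)}‖_F² + σ²η²/p. -/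

import Mathlib

open MeasureTheory
open scoped BigOperators

noncomputable section

/-- Problem data and standing assumptions (lower bound, mixing, smoothness) for
decentralized optimization over `N` nodes in `ℝ^d`. -/
structure MTProblem (N d : ℕ) (Ω : Type) [mΩ : MeasurableSpace Ω] where
  /-- Probability measure driving the stochastic gradients. -/
  μ : Measure Ω
  prob : IsProbabilityMeasure μ
  fstar : ℝ
  L : ℝ
  σ : ℝ
  p : ℝ
  β : ℝ
  /-- Local objectives `f_i`. -/
  f : Fin N → EuclideanSpace ℝ (Fin d) → ℝ
  /-- Local gradients `∇f_i`. -/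
  g : Fin N → EuclideanSpace ℝ (Fin d) → EuclideanSpace ℝ (Fin d)
  /-- Mixing matrix. -/
  W : Fin N → Fin N → ℝ
  /-- Common initial parameter. -/
  x0 : EuclideanSpace ℝ (Fin d)
  hN : 0 < N
  hβ0 : 0 ≤ β
  hβ1 : β < 1
  hL : 0 < L
  hp0 : 0 < p
  hp1 : p ≤ 1
  hgrad : ∀ i v, HasGradientAt (f i) (g i v) v
  /-- Lower bound: `f⋆ ≤ f(x)` for all `x`. -/
  hlb : ∀ v, fstar ≤ (N : ℝ)⁻¹ * ∑ i, f i v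
  /-- `L`-smoothness of each `f_i`. -/
  hsmooth : ∀ i v w, ‖g i v - g i w‖ ≤ L * ‖v - w‖
  hWsymm : ∀ i j, W i j = W j i
  hWrow : ∀ i, ∑ j, W i j = 1
  hWcol : ∀ j, ∑ i, W i j = 1
  /-- Spectral gap: `‖XW − X̄‖_F² ≤ (1−p)‖X − X̄‖_F²`. -/
  hmix : ∀ X : Fin N → EuclideanSpace ℝ (Fin d),
    ∑ j, ‖(∑ i, W i j • X i) - (N : ℝ)⁻¹ • ∑ i, X i‖ ^ 2
      ≤ (1 - p) * ∑ j, ‖X j - (N : ℝ)⁻¹ • ∑ i, X i‖ ^ 2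

namespace MTProblem

variable {N d : ℕ} {Ω : Type} [mΩ : MeasurableSpace Ω]

/-- Global objective `f = (1/N) ∑_i f_i`. -/
def F (P : MTProblem N d Ω) (v : EuclideanSpace ℝ (Fin d)) : ℝ :=
  (N : ℝ)⁻¹ * ∑ i, P.f i v

/-- Gradient of the global objective, `∇f = (1/N) ∑_i ∇f_i`. -/
def gradF (P : MTProblem N d Ω) (v : EuclideanSpace ℝ (Fin d)) : EuclideanSpace ℝ (Fin d) :=
  (N : ℝ)⁻¹ • ∑ i, P.g i v

end MTProblem

/-- A run of the Momentum Tracking algorithm: trajectories `x, u, c`, realized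
stochastic gradients `G r i = ∇F_i(x_i^{(r)}; ξ_i^{(r)})`, together with the update
rules, the standard initialization, and the stochastic-gradient assumptions
(unbiasedness, bounded variance, independence across nodes and rounds in the form
of orthogonality of the noises). -/
structure MTRun {N d : ℕ} {Ω : Type} [mΩ : MeasurableSpace Ω] (P : MTProblem N d Ω) where
  /-- Step size. -/
  η : ℝ
  hη : 0 < η
  x : ℕ → Fin N → Ω → EuclideanSpace ℝ (Fin d)
  u : ℕ → Fin N → Ω → EuclideanSpace ℝ (Fin d)
  c : ℕ → Fin N → Ω → EuclideanSpace ℝ (Fin d)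
  G : ℕ → Fin N → Ω → EuclideanSpace ℝ (Fin d)
  /-- Filtration of the information available at each round. -/
  ℱ : MeasureTheory.Filtration ℕ mΩ
  hx0 : ∀ i, x 0 i = fun _ => P.x0
  hu0 : ∀ i ω, u 0 i ω = (1 - P.β)⁻¹ • (G 0 i ω - (N : ℝ)⁻¹ • ∑ j, G 0 j ω)
  hc0 : ∀ i, c 0 i = u 0 i
  hu : ∀ r i ω, u (r + 1) i ω = P.β • u r i ω + G r i ω
  hx : ∀ r i ω, x (r + 1) i ω
      = (∑ j, P.W i j • x r j ω) - η • (u (r + 1) i ω - c r i ω)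
  hc : ∀ r i ω, c (r + 1) i ω
      = (∑ j, P.W i j • (c r j ω - u (r + 1) j ω)) + u (r + 1) i ω
  hmeas : ∀ r i, MemLp (G r i) 2 P.μ
  hadapted_x : ∀ r i, StronglyMeasurable[ℱ r] (x r i)
  hadapted_G : ∀ r i, StronglyMeasurable[ℱ (r + 1)] (G r i)
  /-- Unbiasedness: `E[∇F_i(x_i^{(r)};ξ) | ℱ_r] = ∇f_i(x_i^{(r)})`. -/
  hunbiased : ∀ r i,
    MeasureTheory.condExp (ℱ r) P.μ (G r i) =ᵐ[P.μ] fun ω => P.g i (x r i ω)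
  /-- Bounded variance. -/
  hvar : ∀ r i, ∫ ω, ‖G r i ω - P.g i (x r i ω)‖ ^ 2 ∂P.μ ≤ P.σ ^ 2
  /-- Independence across nodes and rounds (orthogonality of the noises). -/
  horth : ∀ r s : ℕ, ∀ i j : Fin N, (r, i) ≠ (s, j) →
    ∫ ω, (inner ℝ (G r i ω - P.g i (x r i ω)) (G s j ω - P.g j (x s j ω)) : ℝ) ∂P.μ = 0

namespace MTRun

variable {N d : ℕ} {Ω : Type} [mΩ : MeasurableSpace Ω] {P : MTProblem N d Ω}

/-- Node-average of the parameters, `x̄^{(r)}`. -/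
def xbar (S : MTRun P) (r : ℕ) (ω : Ω) : EuclideanSpace ℝ (Fin d) :=
  (N : ℝ)⁻¹ • ∑ i, S.x r i ω

/-- Node-average of the momenta, `ū^{(r)}`. -/
def ubar (S : MTRun P) (r : ℕ) (ω : Ω) : EuclideanSpace ℝ (Fin d) :=
  (N : ℝ)⁻¹ • ∑ i, S.u r i ω

/-- Node-average of the correction variables, `c̄^{(r)}`. -/
def cbar (S : MTRun P) (r : ℕ) (ω : Ω) : EuclideanSpace ℝ (Fin d) :=
  (N : ℝ)⁻¹ • ∑ i, S.c r i ω

/-- Auxiliary average `z̄^{(r)}`. -/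
def zbar (S : MTRun P) : ℕ → Ω → EuclideanSpace ℝ (Fin d)
  | 0 => S.xbar 0
  | r + 1 => fun ω =>
      (1 - P.β)⁻¹ • S.xbar (r + 1) ω - (P.β * (1 - P.β)⁻¹) • S.xbar r ω

/-- Auxiliary sequence `d_i^{(r)}`. -/
def dseq (S : MTRun P) : ℕ → Fin N → Ω → EuclideanSpace ℝ (Fin d)
  | 0 => fun i ω => (1 - P.β)⁻¹ • (P.g i (S.xbar 0 ω) - P.gradF (S.xbar 0 ω))
  | r + 1 => fun i ω => P.β • dseq S r i ω + P.g i (S.xbar r ω)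

/-- Auxiliary sequence `e_i^{(r)}`. -/
def eseq (S : MTRun P) : ℕ → Fin N → Ω → EuclideanSpace ℝ (Fin d)
  | 0 => fun _ _ => 0
  | r + 1 => fun i ω => P.β • eseq S r i ω + P.gradF (S.xbar r ω)

/-- Node-average `d̄^{(r)}`. -/
def dbar (S : MTRun P) (r : ℕ) (ω : Ω) : EuclideanSpace ℝ (Fin d) :=
  (N : ℝ)⁻¹ • ∑ i, S.dseq r i ω

/-- Node-average `ē^{(r)}`. -/
def ebar (S : MTRun P) (r : ℕ) (ω : Ω) : EuclideanSpace ℝ (Fin d) :=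
  (N : ℝ)⁻¹ • ∑ i, S.eseq r i ω

/-- Consensus distance `Ξ^{(r)} = (1/N) E‖X^{(r)} − X̄^{(r)}‖_F²`. -/
def Xi (S : MTRun P) (r : ℕ) : ℝ :=
  (N : ℝ)⁻¹ * ∫ ω, (∑ i, ‖S.x r i ω - S.xbar r ω‖ ^ 2) ∂P.μ

/-- Tracking error `ℰ^{(r)} = (1/N) E‖D^{(r+1)} − C^{(r)} − E^{(r+1)}‖_F²`. -/
def EE (S : MTRun P) (r : ℕ) : ℝ :=
  (N : ℝ)⁻¹ *
    ∫ ω, (∑ i, ‖S.dseq (r + 1) i ω - S.c r i ω - S.eseq (r + 1) i ω‖ ^ 2) ∂P.μ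

/-- Momentum drift `𝒟^{(r)} = (1/N) E‖D^{(r+1)} − D^{(r)} − E^{(r+1)} + E^{(r)}‖_F²`. -/
def DD (S : MTRun P) (r : ℕ) : ℝ :=
  (N : ℝ)⁻¹ *
    ∫ ω, (∑ i,
      ‖S.dseq (r + 1) i ω - S.dseq r i ω - S.eseq (r + 1) i ω + S.eseq r i ω‖ ^ 2) ∂P.μ

end MTRun


variable {E : Type*} [NormedAddCommGroup E] [InnerProductSpace ℝ E]

theorem aux_young_sq {τ : ℝ} (hτ : 0 < τ) (a b : E) :
    ‖a + b‖^2 ≤ (1+τ)*‖a‖^2 + (1+1/τ)*‖b‖^2 := by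
  have h := norm_add_sq_real a b
  have h2 : (inner ℝ a b : ℝ) ≤ ‖a‖ * ‖b‖ := real_inner_le_norm a b
  have h3 : 2*(‖a‖*‖b‖) ≤ τ*‖a‖^2 + (1/τ)*‖b‖^2 := by
    rw [div_eq_mul_inv, one_mul]
    have hτi : 0 < τ⁻¹ := inv_pos.mpr hτ
    have key : 0 ≤ (τ*‖a‖ - ‖b‖)^2 * τ⁻¹ := by positivity
    have : τ * τ⁻¹ = 1 := mul_inv_cancel₀ (ne_of_gt hτ)
    nlinarith [sq_nonneg (τ*‖a‖ - ‖b‖)]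
  nlinarith

theorem aux_young_sum {ι : Type*} [Fintype ι] {τ : ℝ} (hτ : 0 < τ) (a b : ι → E) :
    ∑ i, ‖a i + b i‖^2 ≤ (1+τ)*∑ i, ‖a i‖^2 + (1+1/τ)*∑ i, ‖b i‖^2 := by
  rw [Finset.mul_sum, Finset.mul_sum, ← Finset.sum_add_distrib]
  exact Finset.sum_le_sum fun i _ => aux_young_sq hτ (a i) (b i)

theorem aux_two_sq (a b : E) : ‖a + b‖^2 ≤ 2*‖a‖^2 + 2*‖b‖^2 := by
  have := aux_young_sq one_pos a b; norm_num at this; linarith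

theorem aux_three_sq (a b c : E) : ‖a + b + c‖^2 ≤ 3*(‖a‖^2 + ‖b‖^2 + ‖c‖^2) := by
  have h1 := norm_add_sq_real (a+b) c
  have h2 := norm_add_sq_real a b
  have hab : (inner ℝ a b : ℝ) ≤ ‖a‖*‖b‖ := real_inner_le_norm a b
  have hac : (inner ℝ (a+b) c : ℝ) ≤ ‖a+b‖*‖c‖ := real_inner_le_norm _ c
  have hn : ‖a+b‖ ≤ ‖a‖ + ‖b‖ := norm_add_le a b
  nlinarith [sq_nonneg (‖a‖-‖b‖), sq_nonneg (‖a‖-‖c‖), sq_nonneg (‖b‖-‖c‖), norm_nonneg a, norm_nonneg b, norm_nonneg c, sq_nonneg (‖a+b‖ - ‖c‖), norm_nonneg (a+b)]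

/-- `∑ ‖a i - avg‖² = ∑‖a i‖² - N‖avg‖² ≤ ∑ ‖a i‖²` -/
theorem aux_sum_sub_const_sq {N : ℕ} (a : Fin N → E) (v : E)
    (hv : ∑ i, a i = (N : ℝ) • v) :
    ∑ i, ‖a i - v‖^2 ≤ ∑ i, ‖a i‖^2 := by
  have expand : ∀ i, ‖a i - v‖^2 = ‖a i‖^2 - 2 * inner ℝ (a i) v + ‖v‖^2 :=
    fun i => norm_sub_sq_real (a i) v
  have hsum : ∑ i, ‖a i - v‖^2
      = ∑ i, ‖a i‖^2 - 2 * inner ℝ (∑ i, a i) v + (N:ℝ) * ‖v‖^2 := by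
    simp_rw [expand, Finset.sum_add_distrib, Finset.sum_sub_distrib, ← Finset.mul_sum,
      sum_inner]
    simp [mul_comm]
  rw [hsum, hv]
  have : (inner ℝ ((N:ℝ) • v) v : ℝ) = (N:ℝ) * ‖v‖^2 := by
    rw [real_inner_smul_left, real_inner_self_eq_norm_sq]
  rw [this]
  nlinarith [norm_nonneg v, sq_nonneg ‖v‖, Nat.cast_nonneg (α := ℝ) N]

theorem aux_norm_sum_sq {ι : Type*} (s : Finset ι) (a : ι → E) :
    ‖∑ i ∈ s, a i‖^2 ≤ (s.card : ℝ) * ∑ i ∈ s, ‖a i‖^2 := by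
  have h1 : ‖∑ i ∈ s, a i‖ ≤ ∑ i ∈ s, ‖a i‖ := norm_sum_le s a
  have h2 : (∑ i ∈ s, ‖a i‖)^2 ≤ (s.card : ℝ) * ∑ i ∈ s, ‖a i‖^2 := by
    have := Finset.sum_mul_sq_le_sq_mul_sq s (fun _ => (1:ℝ)) (fun i => ‖a i‖)
    simpa using this
  calc ‖∑ i ∈ s, a i‖^2 ≤ (∑ i ∈ s, ‖a i‖)^2 := by
        apply pow_le_pow_left₀ (norm_nonneg _) h1
    _ ≤ _ := h2

theorem aux_avg_sq {N : ℕ} (hN : 0 < N) (a : Fin N → E) :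
    ‖(N:ℝ)⁻¹ • ∑ i, a i‖^2 ≤ (N:ℝ)⁻¹ * ∑ i, ‖a i‖^2 := by
  have hN' : (0:ℝ) < N := by exact_mod_cast hN
  rw [norm_smul]
  have := aux_norm_sum_sq Finset.univ a
  simp only [Finset.card_univ, Fintype.card_fin] at this
  rw [mul_pow, Real.norm_eq_abs, sq_abs]
  calc ((N:ℝ)⁻¹)^2 * ‖∑ i, a i‖^2 ≤ ((N:ℝ)⁻¹)^2 * ((N:ℝ) * ∑ i, ‖a i‖^2) := by
        apply mul_le_mul_of_nonneg_left this (by positivity)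
    _ = (N:ℝ)⁻¹ * ∑ i, ‖a i‖^2 := by field_simp
section Helpers2
open MeasureTheory

variable {E : Type*} [NormedAddCommGroup E] [InnerProductSpace ℝ E]

theorem aux_beta_young {β : ℝ} (hβ0 : 0 ≤ β) (hβ1 : β < 1) (x y : E) :
    ‖β • x + y‖^2 ≤ (2*β^2/(1+β^2)) * ‖x‖^2 + (2/(1-β^2)) * ‖y‖^2 := by
  have h1p : (0:ℝ) < 1 + β^2 := by positivity
  have h1m : (0:ℝ) < 1 - β^2 := by nlinarith
  set X := ‖x‖ with hX
  set Y := ‖y‖ with hY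
  have hXn : 0 ≤ X := norm_nonneg x
  have hYn : 0 ≤ Y := norm_nonneg y
  have hnb : ‖β • x + y‖^2 ≤ β^2*X^2 + 2*β*(X*Y) + Y^2 := by
    have h := norm_add_sq_real (β • x) y
    have hi : (inner ℝ (β • x) y : ℝ) ≤ β * (X*Y) := by
      rw [real_inner_smul_left]
      have := real_inner_le_norm x y
      nlinarith
    have hns : ‖β • x‖^2 = β^2 * X^2 := by
      rw [norm_smul, Real.norm_eq_abs, abs_of_nonneg hβ0, mul_pow]
    nlinarith
  have key : (β^2*X^2 + 2*β*(X*Y) + Y^2) * ((1+β^2)*(1-β^2))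
      ≤ (2*β^2*(1-β^2))*X^2 + (2*(1+β^2))*Y^2 := by
    nlinarith [sq_nonneg (β*(1-β^2)*X - (1+β^2)*Y)]
  have hquot : (2*β^2/(1+β^2)) * X^2 + (2/(1-β^2)) * Y^2
        - (β^2*X^2 + 2*β*(X*Y) + Y^2)
      = ((2*β^2*(1-β^2))*X^2 + (2*(1+β^2))*Y^2
          - (β^2*X^2 + 2*β*(X*Y) + Y^2) * ((1+β^2)*(1-β^2))) / ((1+β^2)*(1-β^2)) := by
    field_simp
  have : 0 ≤ (2*β^2/(1+β^2)) * X^2 + (2/(1-β^2)) * Y^2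
      - (β^2*X^2 + 2*β*(X*Y) + Y^2) := by
    rw [hquot]
    apply div_nonneg (by linarith) (by positivity)
  linarith

variable {Ω : Type} [mΩ : MeasurableSpace Ω] {μ : Measure Ω}

theorem aux_int_cmul {Ω : Type} [mΩ : MeasurableSpace Ω] {μ : Measure Ω} (c : ℝ) (f : Ω → ℝ) :
    ∫ ω, c * f ω ∂μ = c * ∫ ω, f ω ∂μ := by
  simpa [smul_eq_mul] using integral_smul c f

theorem aux_int_mono2 {f F1 F2 : Ω → ℝ} {c1 c2 : ℝ}
    (hf : ∀ ω, 0 ≤ f ω) (h1 : Integrable F1 μ) (h2 : Integrable F2 μ)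
    (hle : ∀ ω, f ω ≤ c1 * F1 ω + c2 * F2 ω) :
    ∫ ω, f ω ∂μ ≤ c1 * ∫ ω, F1 ω ∂μ + c2 * ∫ ω, F2 ω ∂μ := by
  have h : ∫ ω, f ω ∂μ ≤ ∫ ω, (c1 * F1 ω + c2 * F2 ω) ∂μ :=
    integral_mono_of_nonneg (Filter.Eventually.of_forall hf)
      ((h1.const_mul c1).add (h2.const_mul c2)) (Filter.Eventually.of_forall hle)
  rwa [integral_add (h1.const_mul c1) (h2.const_mul c2),
    aux_int_cmul, aux_int_cmul] at h

theorem aux_int_mono3 {f F1 F2 F3 : Ω → ℝ} {c1 c2 c3 : ℝ}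
    (hf : ∀ ω, 0 ≤ f ω) (h1 : Integrable F1 μ) (h2 : Integrable F2 μ) (h3 : Integrable F3 μ)
    (hle : ∀ ω, f ω ≤ c1 * F1 ω + c2 * F2 ω + c3 * F3 ω) :
    ∫ ω, f ω ∂μ ≤ c1 * ∫ ω, F1 ω ∂μ + c2 * ∫ ω, F2 ω ∂μ + c3 * ∫ ω, F3 ω ∂μ := by
  have h : ∫ ω, f ω ∂μ ≤ ∫ ω, (c1 * F1 ω + (c2 * F2 ω + c3 * F3 ω)) ∂μ :=
    integral_mono_of_nonneg (Filter.Eventually.of_forall hf)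
      ((h1.const_mul c1).add ((h2.const_mul c2).add (h3.const_mul c3)))
      (Filter.Eventually.of_forall (fun ω => by dsimp only; linarith [hle ω]))
  have e1 : ∫ ω, (c1 * F1 ω + (c2 * F2 ω + c3 * F3 ω)) ∂μ
      = ∫ ω, c1 * F1 ω ∂μ + ∫ ω, (c2 * F2 ω + c3 * F3 ω) ∂μ :=
    integral_add (h1.const_mul c1) ((h2.const_mul c2).add (h3.const_mul c3))
  have e2 : ∫ ω, (c2 * F2 ω + c3 * F3 ω) ∂μ
      = ∫ ω, c2 * F2 ω ∂μ + ∫ ω, c3 * F3 ω ∂μ :=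
    integral_add (h2.const_mul c2) (h3.const_mul c3)
  rw [e1, e2, aux_int_cmul, aux_int_cmul, aux_int_cmul] at h
  linarith

theorem aux_int_mono4 {f F1 F2 F3 F4 : Ω → ℝ} {c1 c2 c3 c4 : ℝ}
    (hf : ∀ ω, 0 ≤ f ω) (h1 : Integrable F1 μ) (h2 : Integrable F2 μ)
    (h3 : Integrable F3 μ) (h4 : Integrable F4 μ)
    (hle : ∀ ω, f ω ≤ c1 * F1 ω + c2 * F2 ω + c3 * F3 ω + c4 * F4 ω) :
    ∫ ω, f ω ∂μ ≤ c1 * ∫ ω, F1 ω ∂μ + c2 * ∫ ω, F2 ω ∂μ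
      + c3 * ∫ ω, F3 ω ∂μ + c4 * ∫ ω, F4 ω ∂μ := by
  have h : ∫ ω, f ω ∂μ ≤ ∫ ω, (c1 * F1 ω + (c2 * F2 ω + (c3 * F3 ω + c4 * F4 ω))) ∂μ :=
    integral_mono_of_nonneg (Filter.Eventually.of_forall hf)
      ((h1.const_mul c1).add ((h2.const_mul c2).add ((h3.const_mul c3).add (h4.const_mul c4))))
      (Filter.Eventually.of_forall (fun ω => by dsimp only; linarith [hle ω]))
  have e1 : ∫ ω, (c1 * F1 ω + (c2 * F2 ω + (c3 * F3 ω + c4 * F4 ω))) ∂μ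
      = ∫ ω, c1 * F1 ω ∂μ + ∫ ω, (c2 * F2 ω + (c3 * F3 ω + c4 * F4 ω)) ∂μ :=
    integral_add (h1.const_mul c1) ((h2.const_mul c2).add ((h3.const_mul c3).add (h4.const_mul c4)))
  have e2 : ∫ ω, (c2 * F2 ω + (c3 * F3 ω + c4 * F4 ω)) ∂μ
      = ∫ ω, c2 * F2 ω ∂μ + ∫ ω, (c3 * F3 ω + c4 * F4 ω) ∂μ :=
    integral_add (h2.const_mul c2) ((h3.const_mul c3).add (h4.const_mul c4))
  have e3 : ∫ ω, (c3 * F3 ω + c4 * F4 ω) ∂μ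
      = ∫ ω, c3 * F3 ω ∂μ + ∫ ω, c4 * F4 ω ∂μ :=
    integral_add (h3.const_mul c3) (h4.const_mul c4)
  rw [e1, e2, e3, aux_int_cmul, aux_int_cmul, aux_int_cmul, aux_int_cmul] at h
  linarith

end Helpers2
section Identities
namespace MTRun

variable {N d : ℕ} {Ω : Type} [mΩ : MeasurableSpace Ω] {P : MTProblem N d Ω} (S : MTRun P)

local notation "E'" => EuclideanSpace ℝ (Fin d)

lemma hNpos (P : MTProblem N d Ω) : (0:ℝ) < (N:ℝ) := by exact_mod_cast P.hN
lemma hNinv (P : MTProblem N d Ω) : ((N:ℝ))⁻¹ * (N:ℝ) = 1 :=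
  inv_mul_cancel₀ (ne_of_gt (hNpos P))

lemma smul_inv_natcast (P : MTProblem N d Ω) (v : E') :
    (N:ℝ) • ((N:ℝ)⁻¹ • v) = v := by
  rw [smul_smul, mul_inv_cancel₀ (ne_of_gt (hNpos P)), one_smul]

/-- sum of g at a point equals N • gradF -/
lemma sum_g (P : MTProblem N d Ω) (v : E') : ∑ i, P.g i v = (N:ℝ) • P.gradF v := by
  rw [MTProblem.gradF, smul_inv_natcast P]

lemma csum_zero : ∀ r ω, ∑ i, S.c r i ω = 0 := by
  intro r
  induction r with
  | zero =>
    intro ω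
    simp only [S.hc0, S.hu0]
    rw [← Finset.smul_sum, Finset.sum_sub_distrib]
    rw [Finset.sum_const, Finset.card_univ, Fintype.card_fin,
      ← Nat.cast_smul_eq_nsmul ℝ, smul_inv_natcast P]
    simp
  | succ r ih =>
    intro ω
    simp only [S.hc]
    rw [Finset.sum_add_distrib, Finset.sum_comm]
    have : ∀ j, ∑ i, P.W i j • (S.c r j ω - S.u (r+1) j ω)
        = S.c r j ω - S.u (r+1) j ω := by
      intro j
      rw [← Finset.sum_smul, P.hWcol j, one_smul]
    rw [Finset.sum_congr rfl (fun j _ => this j), Finset.sum_sub_distrib, ih ω]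
    abel

lemma cbar_zero (r : ℕ) (ω : Ω) : S.cbar r ω = 0 := by
  rw [cbar, S.csum_zero r ω, smul_zero]

lemma usum_succ (r : ℕ) (ω : Ω) :
    ∑ i, S.u (r+1) i ω = P.β • ∑ i, S.u r i ω + ∑ i, S.G r i ω := by
  simp only [S.hu]
  rw [Finset.sum_add_distrib, Finset.smul_sum]

lemma ubar_succ (r : ℕ) (ω : Ω) :
    S.ubar (r+1) ω = P.β • S.ubar r ω + (N:ℝ)⁻¹ • ∑ i, S.G r i ω := by
  rw [ubar, ubar, S.usum_succ, smul_add, smul_comm]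

lemma xsum_succ (r : ℕ) (ω : Ω) :
    ∑ i, S.x (r+1) i ω = ∑ i, S.x r i ω - S.η • ∑ i, S.u (r+1) i ω := by
  simp only [S.hx]
  rw [Finset.sum_sub_distrib, Finset.sum_comm]
  have h1 : ∀ j, ∑ i, P.W i j • S.x r j ω = S.x r j ω := by
    intro j; rw [← Finset.sum_smul, P.hWcol j, one_smul]
  rw [Finset.sum_congr rfl (fun j _ => h1 j)]
  have h2 : ∑ i, S.η • (S.u (r+1) i ω - S.c r i ω)
      = S.η • ∑ i, S.u (r+1) i ω := by
    rw [← Finset.smul_sum, Finset.sum_sub_distrib, S.csum_zero r ω, sub_zero]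
  rw [h2]

lemma xbar_succ (r : ℕ) (ω : Ω) :
    S.xbar (r+1) ω = S.xbar r ω - S.η • S.ubar (r+1) ω := by
  rw [xbar, xbar, ubar, S.xsum_succ, smul_sub, smul_comm]

lemma dsum_eq_esum : ∀ r ω, ∑ i, S.dseq r i ω = ∑ i, S.eseq r i ω := by
  intro r
  induction r with
  | zero =>
    intro ω
    simp only [dseq, eseq]
    rw [← Finset.smul_sum, Finset.sum_sub_distrib, sum_g P]
    rw [Finset.sum_const, Finset.card_univ, Fintype.card_fin,
      ← Nat.cast_smul_eq_nsmul ℝ]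
    simp
  | succ r ih =>
    intro ω
    simp only [dseq, eseq]
    rw [Finset.sum_add_distrib, Finset.sum_add_distrib, ← Finset.smul_sum, ← Finset.smul_sum,
      ih ω, sum_g P]
    rw [Finset.sum_const, Finset.card_univ, Fintype.card_fin,
      ← Nat.cast_smul_eq_nsmul ℝ]

lemma eseq_indep (r : ℕ) (i j : Fin N) (ω : Ω) : S.eseq r i ω = S.eseq r j ω := by
  induction r with
  | zero => simp [eseq]
  | succ r ih => simp only [eseq]; rw [ih]

lemma W_smul_eseq (r : ℕ) (i : Fin N) (ω : Ω) :
    ∑ j, P.W j i • S.eseq r j ω = S.eseq r i ω := by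
  have : ∀ j, P.W j i • S.eseq r j ω = P.W j i • S.eseq r i ω := by
    intro j; rw [S.eseq_indep r j i]
  rw [Finset.sum_congr rfl (fun j _ => this j), ← Finset.sum_smul, P.hWcol i, one_smul]

/-- delta recursion -/
lemma delta_rec (r : ℕ) (i : Fin N) (ω : Ω) :
    S.dseq (r+2) i ω - S.dseq (r+1) i ω - S.eseq (r+2) i ω + S.eseq (r+1) i ω
      = P.β • (S.dseq (r+1) i ω - S.dseq r i ω - S.eseq (r+1) i ω + S.eseq r i ω)
        + ((P.g i (S.xbar (r+1) ω) - P.gradF (S.xbar (r+1) ω))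
            - (P.g i (S.xbar r ω) - P.gradF (S.xbar r ω))) := by
  show S.dseq (r+1+1) i ω - S.dseq (r+1) i ω - S.eseq (r+1+1) i ω + S.eseq (r+1) i ω = _
  simp only [dseq, eseq]
  module

/-- M recursion: M^{(r+1)}_i = (M^{(r)}W)_i + ((YW)_i − Y_i) + δ^{(r+1)}_i -/
lemma M_rec (r : ℕ) (i : Fin N) (ω : Ω) :
    S.dseq (r+2) i ω - S.c (r+1) i ω - S.eseq (r+2) i ω
      = (∑ j, P.W j i • (S.dseq (r+1) j ω - S.c r j ω - S.eseq (r+1) j ω))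
        + ((∑ j, P.W j i • (S.u (r+1) j ω - S.dseq (r+1) j ω))
            - (S.u (r+1) i ω - S.dseq (r+1) i ω))
        + (S.dseq (r+2) i ω - S.dseq (r+1) i ω - S.eseq (r+2) i ω + S.eseq (r+1) i ω) := by
  have hc' : S.c (r+1) i ω
      = (∑ j, P.W j i • (S.c r j ω - S.u (r+1) j ω)) + S.u (r+1) i ω := by
    rw [S.hc]
    congr 1
    exact Finset.sum_congr rfl (fun j _ => by rw [P.hWsymm i j])
  rw [hc']
  have expand : ∀ j, P.W j i • (S.dseq (r+1) j ω - S.c r j ω - S.eseq (r+1) j ω)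
      = P.W j i • S.dseq (r+1) j ω - P.W j i • S.c r j ω - P.W j i • S.eseq (r+1) j ω := by
    intro j; rw [smul_sub, smul_sub]
  have expand2 : ∀ j, P.W j i • (S.u (r+1) j ω - S.dseq (r+1) j ω)
      = P.W j i • S.u (r+1) j ω - P.W j i • S.dseq (r+1) j ω := by
    intro j; rw [smul_sub]
  have expand3 : ∀ j, P.W j i • (S.c r j ω - S.u (r+1) j ω)
      = P.W j i • S.c r j ω - P.W j i • S.u (r+1) j ω := by
    intro j; rw [smul_sub]
  rw [Finset.sum_congr rfl (fun j _ => expand j),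
      Finset.sum_congr rfl (fun j _ => expand2 j),
      Finset.sum_congr rfl (fun j _ => expand3 j)]
  rw [Finset.sum_sub_distrib, Finset.sum_sub_distrib, Finset.sum_sub_distrib,
      Finset.sum_sub_distrib, S.W_smul_eseq (r+1) i ω]
  abel

/-- consensus recursion -/
lemma cons_rec (r : ℕ) (i : Fin N) (ω : Ω) :
    S.x (r+1) i ω - S.xbar (r+1) ω
      = (∑ j, P.W j i • (S.x r j ω - S.xbar r ω))
        + (-S.η) • ((S.u (r+1) i ω - S.c r i ω) - S.ubar (r+1) ω) := by
  rw [S.hx, S.xbar_succ]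
  have h1 : ∑ j, P.W i j • S.x r j ω = ∑ j, P.W j i • S.x r j ω :=
    Finset.sum_congr rfl (fun j _ => by rw [P.hWsymm i j])
  have h2 : ∑ j, P.W j i • (S.x r j ω - S.xbar r ω)
      = (∑ j, P.W j i • S.x r j ω) - S.xbar r ω := by
    have : ∀ j, P.W j i • (S.x r j ω - S.xbar r ω)
        = P.W j i • S.x r j ω - P.W j i • S.xbar r ω := fun j => smul_sub _ _ _
    rw [Finset.sum_congr rfl (fun j _ => this j), Finset.sum_sub_distrib,
      ← Finset.sum_smul, P.hWcol i, one_smul]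
  rw [h1, h2]
  module

end MTRun
end Identities
section MemLp
namespace MTRun

variable {N d : ℕ} {Ω : Type} [mΩ : MeasurableSpace Ω] {P : MTProblem N d Ω} (S : MTRun P)

local notation "E'" => EuclideanSpace ℝ (Fin d)

theorem aux_sq_int {μ : Measure Ω} {f : Ω → E'} (hf : MemLp f 2 μ) :
    Integrable (fun ω => ‖f ω‖^2) μ := by
  have := hf.integrable_norm_rpow (by norm_num) (by norm_num)
  simpa [ENNReal.toReal_ofNat, Real.rpow_natCast] using this

theorem aux_inner_int {μ : Measure Ω} {f g : Ω → E'} (hf : MemLp f 2 μ) (hg : MemLp g 2 μ) :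
    Integrable (fun ω => (inner ℝ (f ω) (g ω) : ℝ)) μ := by
  refine Integrable.mono' ((aux_sq_int hf).add (aux_sq_int hg)) ?_ ?_
  · exact hf.aestronglyMeasurable.inner hg.aestronglyMeasurable
  · filter_upwards with ω
    have h := abs_real_inner_le_norm (f ω) (g ω)
    have : ‖f ω‖ * ‖g ω‖ ≤ ‖f ω‖^2 + ‖g ω‖^2 := by nlinarith [sq_nonneg (‖f ω‖ - ‖g ω‖)]
    simpa [Real.norm_eq_abs] using le_trans h this

theorem aux_sum_sq_int {μ : Measure Ω} {f : Fin N → Ω → E'} (hf : ∀ i, MemLp (f i) 2 μ) :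
    Integrable (fun ω => ∑ i, ‖f i ω‖^2) μ :=
  integrable_finset_sum _ (fun i _ => aux_sq_int (hf i))

lemma g_cont (i : Fin N) : Continuous (P.g i) := by
  have : LipschitzWith (Real.toNNReal P.L) (P.g i) := by
    apply LipschitzWith.of_dist_le_mul
    intro v w
    rw [dist_eq_norm, dist_eq_norm, Real.coe_toNNReal _ P.hL.le]
    exact P.hsmooth i v w
  exact this.continuous

lemma gradF_cont : Continuous (P.gradF) := by
  unfold MTProblem.gradF
  exact (continuous_const (y := (N:ℝ)⁻¹)).smul (continuous_finset_sum _ (fun i _ => g_cont (P := P) i))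

lemma mem_comp_g (i : Fin N) {v : Ω → E'} (hv : MemLp v 2 P.μ) :
    MemLp (fun ω => P.g i (v ω)) 2 P.μ := by
  haveI := P.prob
  have hmeas : AEStronglyMeasurable (fun ω => P.g i (v ω)) P.μ :=
    (g_cont i).comp_aestronglyMeasurable hv.aestronglyMeasurable
  have hdom : MemLp (fun ω => ‖P.g i P.x0‖ + P.L * ‖v ω - P.x0‖) 2 P.μ := by
    apply (memLp_const (μ := P.μ) (p := 2) ‖P.g i P.x0‖).add
    exact (((hv.sub (memLp_const P.x0)).norm).const_mul P.L)
  refine MemLp.of_le hdom hmeas ?_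
  filter_upwards with ω
  have h1 : ‖P.g i (v ω)‖ ≤ ‖P.g i P.x0‖ + ‖P.g i (v ω) - P.g i P.x0‖ := by
    have := norm_add_le (P.g i P.x0) (P.g i (v ω) - P.g i P.x0)
    simpa using this
  have h2 := P.hsmooth i (v ω) P.x0
  have h3 : (0:ℝ) ≤ ‖P.g i P.x0‖ + P.L * ‖v ω - P.x0‖ := by
    have := norm_nonneg (P.g i P.x0)
    have := norm_nonneg (v ω - P.x0)
    nlinarith [P.hL.le]
  rw [Real.norm_eq_abs, abs_of_nonneg h3]
  linarith

lemma mem_comp_gradF {v : Ω → E'} (hv : MemLp v 2 P.μ) :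
    MemLp (fun ω => P.gradF (v ω)) 2 P.μ := by
  have : (fun ω => P.gradF (v ω))
      = fun ω => (N:ℝ)⁻¹ • ∑ i, P.g i (v ω) := by
    funext ω; rfl
  rw [this]
  exact (memLp_finsetSum _ (fun i _ => mem_comp_g i hv)).const_smul (N:ℝ)⁻¹

lemma mem_xuc : ∀ r, (∀ i, MemLp (S.x r i) 2 P.μ) ∧ (∀ i, MemLp (S.u r i) 2 P.μ)
    ∧ (∀ i, MemLp (S.c r i) 2 P.μ) := by
  haveI := P.prob
  intro r
  induction r with
  | zero =>
    have hu : ∀ i, MemLp (S.u 0 i) 2 P.μ := by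
      intro i
      have : S.u 0 i = fun ω => (1 - P.β)⁻¹ • (S.G 0 i ω - (N:ℝ)⁻¹ • ∑ j, S.G 0 j ω) :=
        funext (S.hu0 i)
      rw [this]
      exact (((S.hmeas 0 i).sub ((memLp_finsetSum _
        (fun j _ => S.hmeas 0 j)).const_smul (N:ℝ)⁻¹))).const_smul (1 - P.β)⁻¹
    refine ⟨fun i => ?_, hu, fun i => ?_⟩
    · rw [S.hx0 i]; exact memLp_const _
    · rw [S.hc0 i]; exact hu i
  | succ r ih =>
    obtain ⟨hx, hu, hc⟩ := ih
    have hu' : ∀ i, MemLp (S.u (r+1) i) 2 P.μ := by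
      intro i
      have : S.u (r+1) i = fun ω => P.β • S.u r i ω + S.G r i ω := funext (S.hu r i)
      rw [this]
      exact ((hu i).const_smul P.β).add (S.hmeas r i)
    refine ⟨fun i => ?_, hu', fun i => ?_⟩
    · have : S.x (r+1) i
          = fun ω => (∑ j, P.W i j • S.x r j ω) - S.η • (S.u (r+1) i ω - S.c r i ω) :=
        funext (S.hx r i)
      rw [this]
      exact (memLp_finsetSum _ (fun j _ => (hx j).const_smul (P.W i j))).sub
        (((hu' i).sub (hc i)).const_smul S.η)
    · have : S.c (r+1) i
          = fun ω => (∑ j, P.W i j • (S.c r j ω - S.u (r+1) j ω)) + S.u (r+1) i ω :=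
        funext (S.hc r i)
      rw [this]
      exact (memLp_finsetSum _ (fun j _ => ((hc j).sub (hu' j)).const_smul (P.W i j))).add (hu' i)

lemma mem_x (r : ℕ) (i : Fin N) : MemLp (S.x r i) 2 P.μ := (S.mem_xuc r).1 i
lemma mem_u (r : ℕ) (i : Fin N) : MemLp (S.u r i) 2 P.μ := (S.mem_xuc r).2.1 i
lemma mem_c (r : ℕ) (i : Fin N) : MemLp (S.c r i) 2 P.μ := (S.mem_xuc r).2.2 i

lemma mem_xbar (r : ℕ) : MemLp (S.xbar r) 2 P.μ := by
  have : S.xbar r = fun ω => (N:ℝ)⁻¹ • ∑ i, S.x r i ω := rfl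
  rw [this]
  exact (memLp_finsetSum _ (fun i _ => S.mem_x r i)).const_smul (N:ℝ)⁻¹

lemma mem_ubar (r : ℕ) : MemLp (S.ubar r) 2 P.μ := by
  have : S.ubar r = fun ω => (N:ℝ)⁻¹ • ∑ i, S.u r i ω := rfl
  rw [this]
  exact (memLp_finsetSum _ (fun i _ => S.mem_u r i)).const_smul (N:ℝ)⁻¹

lemma mem_dseq (r : ℕ) (i : Fin N) : MemLp (S.dseq r i) 2 P.μ := by
  induction r with
  | zero =>
    have : S.dseq 0 i = fun ω => (1 - P.β)⁻¹ • (P.g i (S.xbar 0 ω) - P.gradF (S.xbar 0 ω)) := rfl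
    rw [this]
    exact ((mem_comp_g i (S.mem_xbar 0)).sub (mem_comp_gradF (S.mem_xbar 0))).const_smul (1 - P.β)⁻¹
  | succ r ih =>
    have : S.dseq (r+1) i = fun ω => P.β • S.dseq r i ω + P.g i (S.xbar r ω) := rfl
    rw [this]
    exact (ih.const_smul P.β).add (mem_comp_g i (S.mem_xbar r))

lemma mem_eseq (r : ℕ) (i : Fin N) : MemLp (S.eseq r i) 2 P.μ := by
  haveI := P.prob
  induction r with
  | zero =>
    have : S.eseq 0 i = fun _ => (0 : E') := rfl
    rw [this]; exact memLp_const _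
  | succ r ih =>
    have : S.eseq (r+1) i = fun ω => P.β • S.eseq r i ω + P.gradF (S.xbar r ω) := rfl
    rw [this]
    exact (ih.const_smul P.β).add (mem_comp_gradF (S.mem_xbar r))

lemma mem_gradF_xbar (r : ℕ) : MemLp (fun ω => P.gradF (S.xbar r ω)) 2 P.μ :=
  mem_comp_gradF (S.mem_xbar r)

end MTRun
end MemLp
section Recursions
namespace MTRun

variable {N d : ℕ} {Ω : Type} [mΩ : MeasurableSpace Ω] {P : MTProblem N d Ω} (S : MTRun P)

local notation "E'" => EuclideanSpace ℝ (Fin d)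

lemma mix_zero (P : MTProblem N d Ω) (X : Fin N → E') (hz : ∑ j, X j = 0) :
    ∑ j, ‖∑ i, P.W i j • X i‖^2 ≤ (1 - P.p) * ∑ j, ‖X j‖^2 := by
  have h := P.hmix X
  rw [hz, smul_zero] at h
  simpa using h

lemma rec_Xi (r : ℕ) :
    S.Xi (r+1) ≤ (1 - P.p/2) * S.Xi r
      + 9/P.p * S.η^2 * ((N:ℝ)⁻¹ * ∫ ω, (∑ i, ‖S.u (r+1) i ω - S.dseq (r+1) i ω‖^2) ∂P.μ)
      + 9/P.p * S.η^2 * S.EE r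
      + 9/P.p * S.η^2 * ((N:ℝ)⁻¹ * ∫ ω, (∑ i, ‖S.eseq (r+1) i ω‖^2) ∂P.μ) := by
  have hp0 := P.hp0
  have hp1 := P.hp1
  have hη := S.hη
  have hpt : ∀ ω, (∑ i, ‖S.x (r+1) i ω - S.xbar (r+1) ω‖^2)
      ≤ (1 - P.p/2) * (∑ i, ‖S.x r i ω - S.xbar r ω‖^2)
        + (9/P.p * S.η^2) * (∑ i, ‖S.u (r+1) i ω - S.dseq (r+1) i ω‖^2)
        + (9/P.p * S.η^2) * (∑ i, ‖S.dseq (r+1) i ω - S.c r i ω - S.eseq (r+1) i ω‖^2)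
        + (9/P.p * S.η^2) * (∑ i, ‖S.eseq (r+1) i ω‖^2) := by
    intro ω
    rw [Finset.sum_congr rfl (fun i _ => by rw [S.cons_rec r i ω])]
    have hτ : (0:ℝ) < P.p/2 := by linarith
    have hyoung : ∑ i, ‖(∑ j, P.W j i • (S.x r j ω - S.xbar r ω))
          + (-S.η) • ((S.u (r+1) i ω - S.c r i ω) - S.ubar (r+1) ω)‖^2
        ≤ (1 + P.p/2) * ∑ i, ‖∑ j, P.W j i • (S.x r j ω - S.xbar r ω)‖^2
          + (1 + 1/(P.p/2)) * ∑ i, ‖(-S.η) • ((S.u (r+1) i ω - S.c r i ω) - S.ubar (r+1) ω)‖^2 :=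
      aux_young_sum hτ _ _
    have hz : ∑ j, (S.x r j ω - S.xbar r ω) = 0 := by
      rw [Finset.sum_sub_distrib, Finset.sum_const, Finset.card_univ, Fintype.card_fin,
        ← Nat.cast_smul_eq_nsmul ℝ, MTRun.xbar, smul_inv_natcast P, sub_self]
    have hmixA : ∑ i, ‖∑ j, P.W j i • (S.x r j ω - S.xbar r ω)‖^2
        ≤ (1 - P.p) * ∑ j, ‖S.x r j ω - S.xbar r ω‖^2 :=
      mix_zero P _ hz
    have hBeq : ∑ i, ‖(-S.η) • ((S.u (r+1) i ω - S.c r i ω) - S.ubar (r+1) ω)‖^2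
        = S.η^2 * ∑ i, ‖(S.u (r+1) i ω - S.c r i ω) - S.ubar (r+1) ω‖^2 := by
      rw [Finset.mul_sum]
      refine Finset.sum_congr rfl (fun i _ => ?_)
      rw [norm_smul, Real.norm_eq_abs, abs_neg, abs_of_pos hη, mul_pow]
    have hqv : ∑ i, (S.u (r+1) i ω - S.c r i ω) = (N:ℝ) • S.ubar (r+1) ω := by
      rw [Finset.sum_sub_distrib, S.csum_zero r ω, sub_zero, MTRun.ubar, smul_inv_natcast P]
    have hcenter : ∑ i, ‖(S.u (r+1) i ω - S.c r i ω) - S.ubar (r+1) ω‖^2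
        ≤ ∑ i, ‖S.u (r+1) i ω - S.c r i ω‖^2 :=
      aux_sum_sub_const_sq _ _ hqv
    have h3 : ∑ i, ‖S.u (r+1) i ω - S.c r i ω‖^2
        ≤ 3*(∑ i, ‖S.u (r+1) i ω - S.dseq (r+1) i ω‖^2)
          + 3*(∑ i, ‖S.dseq (r+1) i ω - S.c r i ω - S.eseq (r+1) i ω‖^2)
          + 3*(∑ i, ‖S.eseq (r+1) i ω‖^2) := by
      have hper : ∀ i : Fin N, ‖S.u (r+1) i ω - S.c r i ω‖^2
          ≤ 3*(‖S.u (r+1) i ω - S.dseq (r+1) i ω‖^2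
              + ‖S.dseq (r+1) i ω - S.c r i ω - S.eseq (r+1) i ω‖^2
              + ‖S.eseq (r+1) i ω‖^2) := by
        intro i
        have hsplit : S.u (r+1) i ω - S.c r i ω
            = (S.u (r+1) i ω - S.dseq (r+1) i ω)
              + (S.dseq (r+1) i ω - S.c r i ω - S.eseq (r+1) i ω) + S.eseq (r+1) i ω := by
          abel
        rw [hsplit]
        exact aux_three_sq _ _ _
      calc ∑ i, ‖S.u (r+1) i ω - S.c r i ω‖^2
          ≤ ∑ i, 3*(‖S.u (r+1) i ω - S.dseq (r+1) i ω‖^2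
              + ‖S.dseq (r+1) i ω - S.c r i ω - S.eseq (r+1) i ω‖^2
              + ‖S.eseq (r+1) i ω‖^2) := Finset.sum_le_sum (fun i _ => hper i)
        _ = 3*(∑ i, ‖S.u (r+1) i ω - S.dseq (r+1) i ω‖^2)
              + 3*(∑ i, ‖S.dseq (r+1) i ω - S.c r i ω - S.eseq (r+1) i ω‖^2)
              + 3*(∑ i, ‖S.eseq (r+1) i ω‖^2) := by
          simp only [mul_add, Finset.sum_add_distrib, ← Finset.mul_sum]
    -- scalar assembly
    have hF0 : (0:ℝ) ≤ ∑ i, ‖S.x r i ω - S.xbar r ω‖^2 :=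
      Finset.sum_nonneg (fun i _ => sq_nonneg _)
    have hSB : (0:ℝ) ≤ ∑ i, ‖(-S.η) • ((S.u (r+1) i ω - S.c r i ω) - S.ubar (r+1) ω)‖^2 :=
      Finset.sum_nonneg (fun i _ => sq_nonneg _)
    have t1 : (1 + P.p/2) * (∑ i, ‖∑ j, P.W j i • (S.x r j ω - S.xbar r ω)‖^2)
        ≤ (1 - P.p/2) * ∑ i, ‖S.x r i ω - S.xbar r ω‖^2 := by
      have h := mul_le_mul_of_nonneg_left hmixA (by linarith : (0:ℝ) ≤ 1 + P.p/2)
      nlinarith [h, mul_nonneg (sq_nonneg P.p) hF0]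
    have hc : 1 + 1/(P.p/2) ≤ 3/P.p := by
      rw [one_div_div]
      have h1 : (1:ℝ) ≤ 1/P.p := by rw [le_div_iff₀ hp0]; linarith
      have h2 : (3:ℝ)/P.p = 1/P.p + 2/P.p := by ring
      linarith
    have hSQle : ∑ i, ‖(-S.η) • ((S.u (r+1) i ω - S.c r i ω) - S.ubar (r+1) ω)‖^2
        ≤ S.η^2 * (3*(∑ i, ‖S.u (r+1) i ω - S.dseq (r+1) i ω‖^2)
          + 3*(∑ i, ‖S.dseq (r+1) i ω - S.c r i ω - S.eseq (r+1) i ω‖^2)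
          + 3*(∑ i, ‖S.eseq (r+1) i ω‖^2)) := by
      rw [hBeq]
      exact mul_le_mul_of_nonneg_left (le_trans hcenter h3) (sq_nonneg _)
    have t2 : (1 + 1/(P.p/2)) * ∑ i, ‖(-S.η) • ((S.u (r+1) i ω - S.c r i ω) - S.ubar (r+1) ω)‖^2
        ≤ (3/P.p) * (S.η^2 * (3*(∑ i, ‖S.u (r+1) i ω - S.dseq (r+1) i ω‖^2)
          + 3*(∑ i, ‖S.dseq (r+1) i ω - S.c r i ω - S.eseq (r+1) i ω‖^2)
          + 3*(∑ i, ‖S.eseq (r+1) i ω‖^2))) := by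
      apply mul_le_mul hc hSQle hSB
      positivity
    have hring : (3/P.p) * (S.η^2 * (3*(∑ i, ‖S.u (r+1) i ω - S.dseq (r+1) i ω‖^2)
          + 3*(∑ i, ‖S.dseq (r+1) i ω - S.c r i ω - S.eseq (r+1) i ω‖^2)
          + 3*(∑ i, ‖S.eseq (r+1) i ω‖^2)))
        = (9/P.p * S.η^2) * (∑ i, ‖S.u (r+1) i ω - S.dseq (r+1) i ω‖^2)
          + (9/P.p * S.η^2) * (∑ i, ‖S.dseq (r+1) i ω - S.c r i ω - S.eseq (r+1) i ω‖^2)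
          + (9/P.p * S.η^2) * (∑ i, ‖S.eseq (r+1) i ω‖^2) := by ring
    linarith
  have hInt := aux_int_mono4 (μ := P.μ)
    (f := fun ω => ∑ i, ‖S.x (r+1) i ω - S.xbar (r+1) ω‖^2)
    (F1 := fun ω => ∑ i, ‖S.x r i ω - S.xbar r ω‖^2)
    (F2 := fun ω => ∑ i, ‖S.u (r+1) i ω - S.dseq (r+1) i ω‖^2)
    (F3 := fun ω => ∑ i, ‖S.dseq (r+1) i ω - S.c r i ω - S.eseq (r+1) i ω‖^2)
    (F4 := fun ω => ∑ i, ‖S.eseq (r+1) i ω‖^2)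
    (fun ω => Finset.sum_nonneg (fun i _ => sq_nonneg _))
    (aux_sum_sq_int (fun i => (S.mem_x r i).sub (S.mem_xbar r)))
    (aux_sum_sq_int (fun i => (S.mem_u (r+1) i).sub (S.mem_dseq (r+1) i)))
    (aux_sum_sq_int (fun i => ((S.mem_dseq (r+1) i).sub (S.mem_c r i)).sub (S.mem_eseq (r+1) i)))
    (aux_sum_sq_int (fun i => S.mem_eseq (r+1) i))
    hpt
  have hNn : (0:ℝ) ≤ (N:ℝ)⁻¹ := by positivity
  have hmul := mul_le_mul_of_nonneg_left hInt hNn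
  simp only [MTRun.Xi, MTRun.EE]
  nlinarith [hmul]

end MTRun
end Recursions
section Rec2
namespace MTRun

variable {N d : ℕ} {Ω : Type} [mΩ : MeasurableSpace Ω] {P : MTProblem N d Ω} (S : MTRun P)

local notation "E'" => EuclideanSpace ℝ (Fin d)

lemma rec_EE (r : ℕ) :
    S.EE (r+1) ≤ (1 - P.p/2) * S.EE r
      + 24/P.p * ((N:ℝ)⁻¹ * ∫ ω, (∑ i, ‖S.u (r+1) i ω - S.dseq (r+1) i ω‖^2) ∂P.μ)
      + 6/P.p * S.DD (r+1) := by
  have hp0 := P.hp0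
  have hp1 := P.hp1
  have hpt : ∀ ω, (∑ i, ‖S.dseq (r+1+1) i ω - S.c (r+1) i ω - S.eseq (r+1+1) i ω‖^2)
      ≤ (1 - P.p/2) * (∑ i, ‖S.dseq (r+1) i ω - S.c r i ω - S.eseq (r+1) i ω‖^2)
        + (24/P.p) * (∑ i, ‖S.u (r+1) i ω - S.dseq (r+1) i ω‖^2)
        + (6/P.p) * (∑ i, ‖S.dseq (r+1+1) i ω - S.dseq (r+1) i ω - S.eseq (r+1+1) i ω
            + S.eseq (r+1) i ω‖^2) := by
    intro ω
    have hrec : ∀ i : Fin N, S.dseq (r+1+1) i ω - S.c (r+1) i ω - S.eseq (r+1+1) i ω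
        = (∑ j, P.W j i • (S.dseq (r+1) j ω - S.c r j ω - S.eseq (r+1) j ω))
          + (((∑ j, P.W j i • (S.u (r+1) j ω - S.dseq (r+1) j ω))
              - (S.u (r+1) i ω - S.dseq (r+1) i ω))
            + (S.dseq (r+1+1) i ω - S.dseq (r+1) i ω - S.eseq (r+1+1) i ω
                + S.eseq (r+1) i ω)) := by
      intro i
      have h := S.M_rec r i ω
      rw [add_assoc] at h
      exact h
    rw [Finset.sum_congr rfl (fun i _ => by rw [hrec i])]
    have hτ : (0:ℝ) < P.p/2 := by linarith
    have hyoung : ∑ i, ‖(∑ j, P.W j i • (S.dseq (r+1) j ω - S.c r j ω - S.eseq (r+1) j ω))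
          + (((∑ j, P.W j i • (S.u (r+1) j ω - S.dseq (r+1) j ω))
              - (S.u (r+1) i ω - S.dseq (r+1) i ω))
            + (S.dseq (r+1+1) i ω - S.dseq (r+1) i ω - S.eseq (r+1+1) i ω
                + S.eseq (r+1) i ω))‖^2
        ≤ (1 + P.p/2) * ∑ i, ‖∑ j, P.W j i • (S.dseq (r+1) j ω - S.c r j ω - S.eseq (r+1) j ω)‖^2
          + (1 + 1/(P.p/2)) * ∑ i, ‖((∑ j, P.W j i • (S.u (r+1) j ω - S.dseq (r+1) j ω))
              - (S.u (r+1) i ω - S.dseq (r+1) i ω))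
            + (S.dseq (r+1+1) i ω - S.dseq (r+1) i ω - S.eseq (r+1+1) i ω
                + S.eseq (r+1) i ω)‖^2 :=
      aux_young_sum hτ _ _
    have hzM : ∑ j, (S.dseq (r+1) j ω - S.c r j ω - S.eseq (r+1) j ω) = 0 := by
      rw [Finset.sum_sub_distrib, Finset.sum_sub_distrib, S.csum_zero r ω,
        S.dsum_eq_esum (r+1) ω]
      abel
    have hmixM : ∑ i, ‖∑ j, P.W j i • (S.dseq (r+1) j ω - S.c r j ω - S.eseq (r+1) j ω)‖^2
        ≤ (1 - P.p) * ∑ j, ‖S.dseq (r+1) j ω - S.c r j ω - S.eseq (r+1) j ω‖^2 :=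
      mix_zero P _ hzM
    -- bound the Y-part
    have hY : ∑ i, ‖(∑ j, P.W j i • (S.u (r+1) j ω - S.dseq (r+1) j ω))
          - (S.u (r+1) i ω - S.dseq (r+1) i ω)‖^2
        ≤ 4 * ∑ i, ‖S.u (r+1) i ω - S.dseq (r+1) i ω‖^2 := by
      set Y : Fin N → E' := fun j => S.u (r+1) j ω - S.dseq (r+1) j ω with hYdef
      set yb : E' := (N:ℝ)⁻¹ • ∑ j, Y j with hyb
      have hid : ∀ i : Fin N, (∑ j, P.W j i • Y j) - Y i
          = (∑ j, P.W j i • (Y j - yb)) + (-(Y i - yb)) := by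
        intro i
        have h1 : ∑ j, P.W j i • (Y j - yb) = (∑ j, P.W j i • Y j) - yb := by
          rw [Finset.sum_congr rfl (fun j _ => smul_sub (P.W j i) (Y j) yb),
            Finset.sum_sub_distrib, ← Finset.sum_smul, P.hWcol i, one_smul]
        rw [h1]; abel
      rw [Finset.sum_congr rfl (fun i _ => by rw [hid i])]
      have hper : ∀ i : Fin N, ‖(∑ j, P.W j i • (Y j - yb)) + (-(Y i - yb))‖^2
          ≤ 2*‖∑ j, P.W j i • (Y j - yb)‖^2 + 2*‖Y i - yb‖^2 := by
        intro i
        have := aux_two_sq (∑ j, P.W j i • (Y j - yb)) (-(Y i - yb))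
        rwa [norm_neg] at this
      have hzZ : ∑ j, (Y j - yb) = 0 := by
        rw [Finset.sum_sub_distrib, Finset.sum_const, Finset.card_univ, Fintype.card_fin,
          ← Nat.cast_smul_eq_nsmul ℝ, hyb, smul_inv_natcast P, sub_self]
      have hmixZ : ∑ i, ‖∑ j, P.W j i • (Y j - yb)‖^2 ≤ (1-P.p) * ∑ j, ‖Y j - yb‖^2 :=
        mix_zero P _ hzZ
      have hZY : ∑ j, ‖Y j - yb‖^2 ≤ ∑ j, ‖Y j‖^2 :=
        aux_sum_sub_const_sq Y yb (by rw [hyb, smul_inv_natcast P])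
      have hZnn : (0:ℝ) ≤ ∑ j, ‖Y j - yb‖^2 := Finset.sum_nonneg (fun _ _ => sq_nonneg _)
      calc ∑ i, ‖(∑ j, P.W j i • (Y j - yb)) + (-(Y i - yb))‖^2
          ≤ ∑ i, (2*‖∑ j, P.W j i • (Y j - yb)‖^2 + 2*‖Y i - yb‖^2) :=
            Finset.sum_le_sum (fun i _ => hper i)
        _ = 2*(∑ i, ‖∑ j, P.W j i • (Y j - yb)‖^2) + 2*(∑ i, ‖Y i - yb‖^2) := by
            simp only [Finset.sum_add_distrib, ← Finset.mul_sum]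
        _ ≤ 4 * ∑ i, ‖Y i‖^2 := by nlinarith [hmixZ, hZY, hZnn]
    -- bound the B-part
    have hB : ∑ i, ‖((∑ j, P.W j i • (S.u (r+1) j ω - S.dseq (r+1) j ω))
              - (S.u (r+1) i ω - S.dseq (r+1) i ω))
            + (S.dseq (r+1+1) i ω - S.dseq (r+1) i ω - S.eseq (r+1+1) i ω
                + S.eseq (r+1) i ω)‖^2
        ≤ 8 * (∑ i, ‖S.u (r+1) i ω - S.dseq (r+1) i ω‖^2)
          + 2 * (∑ i, ‖S.dseq (r+1+1) i ω - S.dseq (r+1) i ω - S.eseq (r+1+1) i ω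
                + S.eseq (r+1) i ω‖^2) := by
      have hper : ∀ i : Fin N, ‖((∑ j, P.W j i • (S.u (r+1) j ω - S.dseq (r+1) j ω))
              - (S.u (r+1) i ω - S.dseq (r+1) i ω))
            + (S.dseq (r+1+1) i ω - S.dseq (r+1) i ω - S.eseq (r+1+1) i ω
                + S.eseq (r+1) i ω)‖^2
          ≤ 2*‖(∑ j, P.W j i • (S.u (r+1) j ω - S.dseq (r+1) j ω))
              - (S.u (r+1) i ω - S.dseq (r+1) i ω)‖^2
            + 2*‖S.dseq (r+1+1) i ω - S.dseq (r+1) i ω - S.eseq (r+1+1) i ω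
                + S.eseq (r+1) i ω‖^2 := fun i => aux_two_sq _ _
      calc ∑ i, ‖_ + _‖^2
          ≤ ∑ i, (2*‖(∑ j, P.W j i • (S.u (r+1) j ω - S.dseq (r+1) j ω))
              - (S.u (r+1) i ω - S.dseq (r+1) i ω)‖^2
            + 2*‖S.dseq (r+1+1) i ω - S.dseq (r+1) i ω - S.eseq (r+1+1) i ω
                + S.eseq (r+1) i ω‖^2) := Finset.sum_le_sum (fun i _ => hper i)
        _ = 2*(∑ i, ‖(∑ j, P.W j i • (S.u (r+1) j ω - S.dseq (r+1) j ω))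
              - (S.u (r+1) i ω - S.dseq (r+1) i ω)‖^2)
            + 2*(∑ i, ‖S.dseq (r+1+1) i ω - S.dseq (r+1) i ω - S.eseq (r+1+1) i ω
                + S.eseq (r+1) i ω‖^2) := by
            simp only [Finset.sum_add_distrib, ← Finset.mul_sum]
        _ ≤ _ := by nlinarith [hY]
    -- scalar assembly
    have hMnn : (0:ℝ) ≤ ∑ i, ‖S.dseq (r+1) i ω - S.c r i ω - S.eseq (r+1) i ω‖^2 :=
      Finset.sum_nonneg (fun _ _ => sq_nonneg _)
    have hBnn : (0:ℝ) ≤ ∑ i, ‖((∑ j, P.W j i • (S.u (r+1) j ω - S.dseq (r+1) j ω))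
              - (S.u (r+1) i ω - S.dseq (r+1) i ω))
            + (S.dseq (r+1+1) i ω - S.dseq (r+1) i ω - S.eseq (r+1+1) i ω
                + S.eseq (r+1) i ω)‖^2 := Finset.sum_nonneg (fun _ _ => sq_nonneg _)
    have t1 : (1 + P.p/2) * (∑ i, ‖∑ j, P.W j i • (S.dseq (r+1) j ω - S.c r j ω
            - S.eseq (r+1) j ω)‖^2)
        ≤ (1 - P.p/2) * ∑ i, ‖S.dseq (r+1) i ω - S.c r i ω - S.eseq (r+1) i ω‖^2 := by
      have h := mul_le_mul_of_nonneg_left hmixM (by linarith : (0:ℝ) ≤ 1 + P.p/2)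
      nlinarith [h, mul_nonneg (sq_nonneg P.p) hMnn]
    have hc : 1 + 1/(P.p/2) ≤ 3/P.p := by
      rw [one_div_div]
      have h1 : (1:ℝ) ≤ 1/P.p := by rw [le_div_iff₀ hp0]; linarith
      have h2 : (3:ℝ)/P.p = 1/P.p + 2/P.p := by ring
      linarith
    have t2 := mul_le_mul hc hB hBnn (by positivity : (0:ℝ) ≤ 3/P.p)
    have hUDnn : (0:ℝ) ≤ ∑ i, ‖S.u (r+1) i ω - S.dseq (r+1) i ω‖^2 :=
      Finset.sum_nonneg (fun _ _ => sq_nonneg _)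
    have hDnn : (0:ℝ) ≤ ∑ i, ‖S.dseq (r+1+1) i ω - S.dseq (r+1) i ω - S.eseq (r+1+1) i ω
                + S.eseq (r+1) i ω‖^2 := Finset.sum_nonneg (fun _ _ => sq_nonneg _)
    have hexp : (3/P.p) * (8 * (∑ i, ‖S.u (r+1) i ω - S.dseq (r+1) i ω‖^2)
          + 2 * (∑ i, ‖S.dseq (r+1+1) i ω - S.dseq (r+1) i ω - S.eseq (r+1+1) i ω
                + S.eseq (r+1) i ω‖^2))
        = (24/P.p) * (∑ i, ‖S.u (r+1) i ω - S.dseq (r+1) i ω‖^2)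
          + (6/P.p) * (∑ i, ‖S.dseq (r+1+1) i ω - S.dseq (r+1) i ω - S.eseq (r+1+1) i ω
                + S.eseq (r+1) i ω‖^2) := by ring
    linarith
  have hInt := aux_int_mono3 (μ := P.μ)
    (f := fun ω => ∑ i, ‖S.dseq (r+1+1) i ω - S.c (r+1) i ω - S.eseq (r+1+1) i ω‖^2)
    (F1 := fun ω => ∑ i, ‖S.dseq (r+1) i ω - S.c r i ω - S.eseq (r+1) i ω‖^2)
    (F2 := fun ω => ∑ i, ‖S.u (r+1) i ω - S.dseq (r+1) i ω‖^2)
    (F3 := fun ω => ∑ i, ‖S.dseq (r+1+1) i ω - S.dseq (r+1) i ω - S.eseq (r+1+1) i ω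
                + S.eseq (r+1) i ω‖^2)
    (fun ω => Finset.sum_nonneg (fun i _ => sq_nonneg _))
    (aux_sum_sq_int (fun i => ((S.mem_dseq (r+1) i).sub (S.mem_c r i)).sub (S.mem_eseq (r+1) i)))
    (aux_sum_sq_int (fun i => (S.mem_u (r+1) i).sub (S.mem_dseq (r+1) i)))
    (aux_sum_sq_int (fun i => (((S.mem_dseq (r+1+1) i).sub (S.mem_dseq (r+1) i)).sub
      (S.mem_eseq (r+1+1) i)).add (S.mem_eseq (r+1) i)))
    hpt
  have hNn : (0:ℝ) ≤ (N:ℝ)⁻¹ := by positivity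
  have hmul := mul_le_mul_of_nonneg_left hInt hNn
  simp only [MTRun.EE, MTRun.DD]
  nlinarith [hmul]

end MTRun
end Rec2
section Rec3
namespace MTRun

variable {N d : ℕ} {Ω : Type} [mΩ : MeasurableSpace Ω] {P : MTProblem N d Ω} (S : MTRun P)

local notation "E'" => EuclideanSpace ℝ (Fin d)

lemma rec_DD (r : ℕ) :
    S.DD (r+1) ≤ (2*P.β^2/(1+P.β^2)) * S.DD r
      + (2/(1-P.β^2)) * P.L^2 * S.η^2 * ∫ ω, ‖S.ubar (r+1) ω‖^2 ∂P.μ := by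
  have hβ0 := P.hβ0
  have hβ1 := P.hβ1
  have hβ2 : (0:ℝ) < 1 - P.β^2 := by nlinarith
  have hpt : ∀ ω, (∑ i, ‖S.dseq (r+1+1) i ω - S.dseq (r+1) i ω - S.eseq (r+1+1) i ω
        + S.eseq (r+1) i ω‖^2)
      ≤ (2*P.β^2/(1+P.β^2)) * (∑ i, ‖S.dseq (r+1) i ω - S.dseq r i ω - S.eseq (r+1) i ω
          + S.eseq r i ω‖^2)
        + ((2/(1-P.β^2)) * ((N:ℝ) * (P.L^2 * S.η^2))) * ‖S.ubar (r+1) ω‖^2 := by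
    intro ω
    rw [Finset.sum_congr rfl (fun i _ => by rw [S.delta_rec r i ω])]
    have hper : ∀ i : Fin N, ‖P.β • (S.dseq (r+1) i ω - S.dseq r i ω - S.eseq (r+1) i ω
          + S.eseq r i ω)
        + ((P.g i (S.xbar (r+1) ω) - P.gradF (S.xbar (r+1) ω))
            - (P.g i (S.xbar r ω) - P.gradF (S.xbar r ω)))‖^2
        ≤ (2*P.β^2/(1+P.β^2)) * ‖S.dseq (r+1) i ω - S.dseq r i ω - S.eseq (r+1) i ω
          + S.eseq r i ω‖^2
          + (2/(1-P.β^2)) * ‖(P.g i (S.xbar (r+1) ω) - P.gradF (S.xbar (r+1) ω))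
            - (P.g i (S.xbar r ω) - P.gradF (S.xbar r ω))‖^2 :=
      fun i => aux_beta_young hβ0 hβ1 _ _
    have hΔ : ∑ i, ‖(P.g i (S.xbar (r+1) ω) - P.gradF (S.xbar (r+1) ω))
            - (P.g i (S.xbar r ω) - P.gradF (S.xbar r ω))‖^2
        ≤ (N:ℝ) * (P.L^2 * S.η^2) * ‖S.ubar (r+1) ω‖^2 := by
      have hre : ∀ i : Fin N, (P.g i (S.xbar (r+1) ω) - P.gradF (S.xbar (r+1) ω))
            - (P.g i (S.xbar r ω) - P.gradF (S.xbar r ω))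
          = (P.g i (S.xbar (r+1) ω) - P.g i (S.xbar r ω))
            - (P.gradF (S.xbar (r+1) ω) - P.gradF (S.xbar r ω)) :=
        fun i => sub_sub_sub_comm _ _ _ _
      rw [Finset.sum_congr rfl (fun i _ => by rw [hre i])]
      have hv : ∑ i, (P.g i (S.xbar (r+1) ω) - P.g i (S.xbar r ω))
          = (N:ℝ) • (P.gradF (S.xbar (r+1) ω) - P.gradF (S.xbar r ω)) := by
        rw [Finset.sum_sub_distrib, sum_g P, sum_g P, smul_sub]
      have h1 := aux_sum_sub_const_sq
        (fun i => P.g i (S.xbar (r+1) ω) - P.g i (S.xbar r ω))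
        (P.gradF (S.xbar (r+1) ω) - P.gradF (S.xbar r ω)) hv
      have h2 : ∑ i, ‖P.g i (S.xbar (r+1) ω) - P.g i (S.xbar r ω)‖^2
          ≤ (N:ℝ) * (P.L^2 * S.η^2 * ‖S.ubar (r+1) ω‖^2) := by
        have hx : S.xbar (r+1) ω - S.xbar r ω = -(S.η • S.ubar (r+1) ω) := by
          rw [S.xbar_succ]; abel
        have hnx : ‖S.xbar (r+1) ω - S.xbar r ω‖^2 = S.η^2 * ‖S.ubar (r+1) ω‖^2 := by
          rw [hx, norm_neg, norm_smul, Real.norm_eq_abs, mul_pow, sq_abs]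
        have hper2 : ∀ i : Fin N, ‖P.g i (S.xbar (r+1) ω) - P.g i (S.xbar r ω)‖^2
            ≤ P.L^2 * S.η^2 * ‖S.ubar (r+1) ω‖^2 := by
          intro i
          have hs := P.hsmooth i (S.xbar (r+1) ω) (S.xbar r ω)
          have := pow_le_pow_left₀ (norm_nonneg _) hs 2
          rw [mul_pow, hnx] at this
          linarith [this]
        calc ∑ i, ‖P.g i (S.xbar (r+1) ω) - P.g i (S.xbar r ω)‖^2
            ≤ ∑ _i : Fin N, P.L^2 * S.η^2 * ‖S.ubar (r+1) ω‖^2 :=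
              Finset.sum_le_sum (fun i _ => hper2 i)
          _ = (N:ℝ) * (P.L^2 * S.η^2 * ‖S.ubar (r+1) ω‖^2) := by
              rw [Finset.sum_const, Finset.card_univ, Fintype.card_fin, nsmul_eq_mul]
      calc ∑ i, ‖(P.g i (S.xbar (r+1) ω) - P.g i (S.xbar r ω))
            - (P.gradF (S.xbar (r+1) ω) - P.gradF (S.xbar r ω))‖^2
          ≤ ∑ i, ‖P.g i (S.xbar (r+1) ω) - P.g i (S.xbar r ω)‖^2 := h1
        _ ≤ (N:ℝ) * (P.L^2 * S.η^2 * ‖S.ubar (r+1) ω‖^2) := h2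
        _ = (N:ℝ) * (P.L^2 * S.η^2) * ‖S.ubar (r+1) ω‖^2 := by ring
    calc ∑ i, ‖P.β • (S.dseq (r+1) i ω - S.dseq r i ω - S.eseq (r+1) i ω + S.eseq r i ω)
          + ((P.g i (S.xbar (r+1) ω) - P.gradF (S.xbar (r+1) ω))
            - (P.g i (S.xbar r ω) - P.gradF (S.xbar r ω)))‖^2
        ≤ ∑ i, ((2*P.β^2/(1+P.β^2)) * ‖S.dseq (r+1) i ω - S.dseq r i ω - S.eseq (r+1) i ω
          + S.eseq r i ω‖^2
          + (2/(1-P.β^2)) * ‖(P.g i (S.xbar (r+1) ω) - P.gradF (S.xbar (r+1) ω))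
            - (P.g i (S.xbar r ω) - P.gradF (S.xbar r ω))‖^2) :=
          Finset.sum_le_sum (fun i _ => hper i)
      _ = (2*P.β^2/(1+P.β^2)) * (∑ i, ‖S.dseq (r+1) i ω - S.dseq r i ω - S.eseq (r+1) i ω
          + S.eseq r i ω‖^2)
          + (2/(1-P.β^2)) * (∑ i, ‖(P.g i (S.xbar (r+1) ω) - P.gradF (S.xbar (r+1) ω))
            - (P.g i (S.xbar r ω) - P.gradF (S.xbar r ω))‖^2) := by
          simp only [Finset.sum_add_distrib, ← Finset.mul_sum]
      _ ≤ _ := by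
          have h := mul_le_mul_of_nonneg_left hΔ (by positivity : (0:ℝ) ≤ 2/(1-P.β^2))
          nlinarith [h]
  have hInt := aux_int_mono2 (μ := P.μ)
    (f := fun ω => ∑ i, ‖S.dseq (r+1+1) i ω - S.dseq (r+1) i ω - S.eseq (r+1+1) i ω
        + S.eseq (r+1) i ω‖^2)
    (F1 := fun ω => ∑ i, ‖S.dseq (r+1) i ω - S.dseq r i ω - S.eseq (r+1) i ω
        + S.eseq r i ω‖^2)
    (F2 := fun ω => ‖S.ubar (r+1) ω‖^2)
    (fun ω => Finset.sum_nonneg (fun i _ => sq_nonneg _))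
    (aux_sum_sq_int (fun i => (((S.mem_dseq (r+1) i).sub (S.mem_dseq r i)).sub
      (S.mem_eseq (r+1) i)).add (S.mem_eseq r i)))
    (aux_sq_int (S.mem_ubar (r+1)))
    hpt
  have hNn : (0:ℝ) ≤ (N:ℝ)⁻¹ := by positivity
  have hmul := mul_le_mul_of_nonneg_left hInt hNn
  have hNe : ((N:ℝ))⁻¹ * ((2/(1-P.β^2)) * ((N:ℝ) * (P.L^2 * S.η^2))
        * ∫ ω, ‖S.ubar (r+1) ω‖^2 ∂P.μ)
      = (2/(1-P.β^2)) * P.L^2 * S.η^2 * ∫ ω, ‖S.ubar (r+1) ω‖^2 ∂P.μ := by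
    have hN0 : ((N:ℝ)) ≠ 0 := ne_of_gt (hNpos P)
    field_simp
  simp only [MTRun.DD]
  nlinarith [hmul, hNe]

lemma rec_ubar (r : ℕ) :
    ∫ ω, ‖S.ubar (r+1) ω‖^2 ∂P.μ
      ≤ 2*P.β^2 * ∫ ω, ‖S.ubar r ω‖^2 ∂P.μ
        + 2 * ∫ ω, ‖(N:ℝ)⁻¹ • ∑ i, S.G r i ω‖^2 ∂P.μ := by
  have hβ0 := P.hβ0
  have hpt : ∀ ω, ‖S.ubar (r+1) ω‖^2
      ≤ 2*P.β^2 * ‖S.ubar r ω‖^2 + 2 * ‖(N:ℝ)⁻¹ • ∑ i, S.G r i ω‖^2 := by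
    intro ω
    rw [S.ubar_succ r ω]
    have h := aux_two_sq (P.β • S.ubar r ω) ((N:ℝ)⁻¹ • ∑ i, S.G r i ω)
    have hb : ‖P.β • S.ubar r ω‖^2 = P.β^2 * ‖S.ubar r ω‖^2 := by
      rw [norm_smul, Real.norm_eq_abs, abs_of_nonneg hβ0, mul_pow]
    nlinarith [h]
  exact aux_int_mono2
    (fun ω => sq_nonneg _)
    (aux_sq_int (S.mem_ubar r))
    (aux_sq_int ((memLp_finsetSum _ (fun i _ => S.hmeas r i)).const_smul (N:ℝ)⁻¹))
    hpt

lemma noise_bound (r : ℕ) :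
    ∫ ω, ‖(N:ℝ)⁻¹ • ∑ i, (S.G r i ω - P.g i (S.x r i ω))‖^2 ∂P.μ ≤ P.σ^2/(N:ℝ) := by
  have hmemν : ∀ i, MemLp (fun ω => S.G r i ω - P.g i (S.x r i ω)) 2 P.μ :=
    fun i => (S.hmeas r i).sub (mem_comp_g i (S.mem_x r i))
  have hptw : (fun ω => ‖(N:ℝ)⁻¹ • ∑ i, (S.G r i ω - P.g i (S.x r i ω))‖^2)
      = fun ω => ((N:ℝ)⁻¹)^2 * ∑ i, ∑ j, (inner ℝ (S.G r i ω - P.g i (S.x r i ω))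
          (S.G r j ω - P.g j (S.x r j ω)) : ℝ) := by
    funext ω
    rw [norm_smul, mul_pow, Real.norm_eq_abs, sq_abs]
    congr 1
    rw [← real_inner_self_eq_norm_sq, sum_inner]
    exact Finset.sum_congr rfl (fun i _ => inner_sum _ _ _)
  rw [hptw, aux_int_cmul,
    integral_finset_sum _ (fun i _ => integrable_finset_sum _
      (fun j _ => aux_inner_int (hmemν i) (hmemν j)))]
  have hi : ∀ i : Fin N, ∫ ω, (∑ j, (inner ℝ (S.G r i ω - P.g i (S.x r i ω))
      (S.G r j ω - P.g j (S.x r j ω)) : ℝ)) ∂P.μ ≤ P.σ^2 := by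
    intro i
    rw [integral_finset_sum _ (fun j _ => aux_inner_int (hmemν i) (hmemν j))]
    rw [Finset.sum_eq_single_of_mem i (Finset.mem_univ i)
      (fun j _ hj => S.horth r r i j (fun hcontra => hj (by
        have := congrArg Prod.snd hcontra; simpa using this.symm)))]
    have he : ∫ ω, (inner ℝ (S.G r i ω - P.g i (S.x r i ω))
        (S.G r i ω - P.g i (S.x r i ω)) : ℝ) ∂P.μ
        = ∫ ω, ‖S.G r i ω - P.g i (S.x r i ω)‖^2 ∂P.μ :=
      integral_congr_ae (Filter.Eventually.of_forall
        (fun ω => real_inner_self_eq_norm_sq _))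
    rw [he]
    exact S.hvar r i
  have hsum : ∑ i, (∫ ω, (∑ j, (inner ℝ (S.G r i ω - P.g i (S.x r i ω))
      (S.G r j ω - P.g j (S.x r j ω)) : ℝ)) ∂P.μ) ≤ (N:ℝ) * P.σ^2 := by
    calc ∑ i, (∫ ω, (∑ j, (inner ℝ (S.G r i ω - P.g i (S.x r i ω))
        (S.G r j ω - P.g j (S.x r j ω)) : ℝ)) ∂P.μ)
        ≤ ∑ _i : Fin N, P.σ^2 := Finset.sum_le_sum (fun i _ => hi i)
      _ = (N:ℝ) * P.σ^2 := by
          rw [Finset.sum_const, Finset.card_univ, Fintype.card_fin, nsmul_eq_mul]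
  have hNn : (0:ℝ) ≤ ((N:ℝ)⁻¹)^2 := by positivity
  have hfin := mul_le_mul_of_nonneg_left hsum hNn
  have heq : ((N:ℝ)⁻¹)^2 * ((N:ℝ) * P.σ^2) = P.σ^2/(N:ℝ) := by
    have hN0 : ((N:ℝ)) ≠ 0 := ne_of_gt (hNpos P)
    field_simp
  linarith [hfin, heq.le, heq.ge]

lemma rec_g (r : ℕ) :
    ∫ ω, ‖(N:ℝ)⁻¹ • ∑ i, S.G r i ω‖^2 ∂P.μ
      ≤ 2*(P.σ^2/(N:ℝ)) + 4 * (∫ ω, ‖P.gradF (S.xbar r ω)‖^2 ∂P.μ) + 4*P.L^2 * S.Xi r := by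
  have hpt : ∀ ω, ‖(N:ℝ)⁻¹ • ∑ i, S.G r i ω‖^2
      ≤ 2 * ‖(N:ℝ)⁻¹ • ∑ i, (S.G r i ω - P.g i (S.x r i ω))‖^2
        + 4 * ‖P.gradF (S.xbar r ω)‖^2
        + (4*P.L^2*(N:ℝ)⁻¹) * (∑ i, ‖S.x r i ω - S.xbar r ω‖^2) := by
    intro ω
    have hid : (N:ℝ)⁻¹ • ∑ i, S.G r i ω
        = ((N:ℝ)⁻¹ • ∑ i, (S.G r i ω - P.g i (S.x r i ω)))
          + ((N:ℝ)⁻¹ • ∑ i, P.g i (S.x r i ω)) := by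
      rw [← smul_add, ← Finset.sum_add_distrib]
      congr 1
      exact Finset.sum_congr rfl (fun i _ => by abel)
    have h1 : ‖(N:ℝ)⁻¹ • ∑ i, S.G r i ω‖^2
        ≤ 2*‖(N:ℝ)⁻¹ • ∑ i, (S.G r i ω - P.g i (S.x r i ω))‖^2
          + 2*‖(N:ℝ)⁻¹ • ∑ i, P.g i (S.x r i ω)‖^2 := by
      rw [hid]; exact aux_two_sq _ _
    have hid2 : (N:ℝ)⁻¹ • ∑ i, P.g i (S.x r i ω)
        = P.gradF (S.xbar r ω)
          + (N:ℝ)⁻¹ • ∑ i, (P.g i (S.x r i ω) - P.g i (S.xbar r ω)) := by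
      rw [MTProblem.gradF, ← smul_add, ← Finset.sum_add_distrib]
      congr 1
      exact Finset.sum_congr rfl (fun i _ => by abel)
    have h2 : ‖(N:ℝ)⁻¹ • ∑ i, P.g i (S.x r i ω)‖^2
        ≤ 2*‖P.gradF (S.xbar r ω)‖^2
          + 2*‖(N:ℝ)⁻¹ • ∑ i, (P.g i (S.x r i ω) - P.g i (S.xbar r ω))‖^2 := by
      rw [hid2]; exact aux_two_sq _ _
    have h3 : ‖(N:ℝ)⁻¹ • ∑ i, (P.g i (S.x r i ω) - P.g i (S.xbar r ω))‖^2
        ≤ (N:ℝ)⁻¹ * ∑ i, ‖P.g i (S.x r i ω) - P.g i (S.xbar r ω)‖^2 :=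
      aux_avg_sq P.hN _
    have h4 : ∑ i, ‖P.g i (S.x r i ω) - P.g i (S.xbar r ω)‖^2
        ≤ P.L^2 * ∑ i, ‖S.x r i ω - S.xbar r ω‖^2 := by
      rw [Finset.mul_sum]
      refine Finset.sum_le_sum (fun i _ => ?_)
      have hs := P.hsmooth i (S.x r i ω) (S.xbar r ω)
      have := pow_le_pow_left₀ (norm_nonneg _) hs 2
      rw [mul_pow] at this
      linarith
    have hNn : (0:ℝ) ≤ (N:ℝ)⁻¹ := by positivity
    have h5 := mul_le_mul_of_nonneg_left h4 hNn
    nlinarith [h1, h2, h3, h5]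
  have hInt := aux_int_mono3 (μ := P.μ)
    (f := fun ω => ‖(N:ℝ)⁻¹ • ∑ i, S.G r i ω‖^2)
    (F1 := fun ω => ‖(N:ℝ)⁻¹ • ∑ i, (S.G r i ω - P.g i (S.x r i ω))‖^2)
    (F2 := fun ω => ‖P.gradF (S.xbar r ω)‖^2)
    (F3 := fun ω => ∑ i, ‖S.x r i ω - S.xbar r ω‖^2)
    (fun ω => sq_nonneg _)
    (aux_sq_int ((memLp_finsetSum _ (fun i _ => (S.hmeas r i).sub
      (mem_comp_g i (S.mem_x r i)))).const_smul (N:ℝ)⁻¹))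
    (aux_sq_int (S.mem_gradF_xbar r))
    (aux_sum_sq_int (fun i => (S.mem_x r i).sub (S.mem_xbar r)))
    hpt
  have hnoise := S.noise_bound r
  simp only [MTRun.Xi]
  nlinarith [hInt, hnoise]

end MTRun
end Rec3
set_option maxHeartbeats 2000000 in
/-- **Lemma** (joint recursion for `Ξ`, `ℰ`, `𝒟`): with `t = 2β²p/(1−β²) + 4` and
`A = 648/(1 − p/t − 2β²/(1+β²))`, if `η ≤ p/(8L√(324 + 2Aβ²/(1−β²)))`, then for every
`r ≥ 0` the stated joint contraction inequality holds. -/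
theorem joint_recursion
    (N d : ℕ) (Ω : Type) [mΩ : MeasurableSpace Ω]
    (P : MTProblem N d Ω) (S : MTRun P) (t A : ℝ)
    (ht : t = 2 * P.β ^ 2 * P.p / (1 - P.β ^ 2) + 4)
    (hA : A = 648 / (1 - P.p / t - 2 * P.β ^ 2 / (1 + P.β ^ 2)))
    (hstep : S.η ≤ P.p / (8 * P.L * Real.sqrt (324 + 2 * A * P.β ^ 2 / (1 - P.β ^ 2)))) :
    ∀ r : ℕ,
      S.Xi (r + 1) + 36 / P.p ^ 2 * S.η ^ 2 * S.EE (r + 1)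
          + A * P.β ^ 2 / P.p ^ 3 * S.η ^ 2 * S.DD (r + 1) ≤
        (1 - P.p / t) *
            (S.Xi r + 36 / P.p ^ 2 * S.η ^ 2 * S.EE r
              + A * P.β ^ 2 / P.p ^ 3 * S.η ^ 2 * S.DD r)
          + 1 / P.p * S.η ^ 2 * ∫ ω, ‖P.gradF (S.xbar r ω)‖ ^ 2 ∂P.μ
          + 1 / ((N : ℝ) * P.p) * (9 + 864 / P.p ^ 2) * S.η ^ 2 *
              ∫ ω, (∑ i, ‖S.u (r + 1) i ω - S.dseq (r + 1) i ω‖ ^ 2) ∂P.μ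
          + P.L ^ 2 / P.p ^ 3 * (2592 * P.β ^ 2 + 16 * A * P.β ^ 4 / (1 - P.β ^ 2)) *
              S.η ^ 4 * ∫ ω, ‖S.ubar r ω‖ ^ 2 ∂P.μ
          + 9 / ((N : ℝ) * P.p) * S.η ^ 2 * ∫ ω, (∑ i, ‖S.eseq (r + 1) i ω‖ ^ 2) ∂P.μ
          + P.σ ^ 2 * S.η ^ 2 / P.p := by
  intro r
  -- basic scalar facts
  have hβ0 := P.hβ0
  have hβ1 := P.hβ1
  have hp0 := P.hp0
  have hp1 := P.hp1
  have hL := P.hL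
  have hη := S.hη
  have hβ2m : (0:ℝ) < 1 - P.β^2 := by nlinarith
  have hβ2p : (0:ℝ) < 1 + P.β^2 := by positivity
  have hNpos : (0:ℝ) < (N:ℝ) := by exact_mod_cast P.hN
  have hN1 : (1:ℝ) ≤ (N:ℝ) := by exact_mod_cast P.hN
  have ht4 : 4 ≤ t := by
    rw [ht]
    have h := div_nonneg (by positivity : (0:ℝ) ≤ 2*P.β^2*P.p) hβ2m.le
    linarith
  have ht0 : (0:ℝ) < t := by linarith
  have hpt4 : P.p/t ≤ P.p/4 := div_le_div_of_nonneg_left hp0.le (by norm_num) ht4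
  have hptnn : 0 ≤ P.p/t := div_nonneg hp0.le ht0.le
  have hDpos : (0:ℝ) < 1 - P.p/t - 2*P.β^2/(1+P.β^2) := by
    have key : P.p/t < (1 - P.β^2)/(1+P.β^2) := by
      rw [div_lt_div_iff₀ ht0 hβ2p]
      have e : (1-P.β^2)*t = 2*P.β^2*P.p + 4*(1-P.β^2) := by
        rw [ht]; field_simp
      nlinarith [mul_pos (show (0:ℝ) < 4 - P.p by linarith) hβ2m]
    have e3 : 1 - 2*P.β^2/(1+P.β^2) = (1-P.β^2)/(1+P.β^2) := by
      field_simp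
      ring
    linarith
  have hDle1 : 1 - P.p/t - 2*P.β^2/(1+P.β^2) ≤ 1 := by
    have h2 : 0 ≤ 2*P.β^2/(1+P.β^2) := div_nonneg (by positivity) hβ2p.le
    linarith
  have hA0 : (0:ℝ) < A := by rw [hA]; exact div_pos (by norm_num) hDpos
  have hA648 : (648:ℝ) ≤ A := by
    rw [hA, le_div_iff₀ hDpos]
    nlinarith [hDle1]
  have hAid : A * (1 - P.p/t - 2*P.β^2/(1+P.β^2)) = 648 := by
    rw [hA]; exact div_mul_cancel₀ 648 hDpos.ne'
  have hmt : 1 - P.p/t = 648/A + 2*P.β^2/(1+P.β^2) := by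
    have h : 1 - P.p/t - 2*P.β^2/(1+P.β^2) = 648/A := by
      rw [eq_div_iff hA0.ne']
      linarith [hAid]
    linarith
  -- step size consequences
  have hK0 : (0:ℝ) < 324 + 2*A*P.β^2/(1-P.β^2) := by
    have := div_nonneg (by positivity : (0:ℝ) ≤ 2*A*P.β^2) hβ2m.le
    linarith
  have hK1 : (324:ℝ) ≤ 324 + 2*A*P.β^2/(1-P.β^2) := by
    have := div_nonneg (by positivity : (0:ℝ) ≤ 2*A*P.β^2) hβ2m.le
    linarith
  have hη2 : S.η^2 ≤ P.p^2/(64*P.L^2*(324 + 2*A*P.β^2/(1-P.β^2))) := by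
    have hsq := pow_le_pow_left₀ hη.le hstep 2
    have e : (P.p/(8*P.L*Real.sqrt (324 + 2*A*P.β^2/(1-P.β^2))))^2
        = P.p^2/(64*P.L^2*(324 + 2*A*P.β^2/(1-P.β^2))) := by
      rw [div_pow, mul_pow, mul_pow, Real.sq_sqrt hK0.le]
      norm_num
    rw [e] at hsq
    exact hsq
  have hcK : 216 + A*P.β^2 ≤ 4*((1-P.β^2)*(324 + 2*A*P.β^2/(1-P.β^2))) := by
    have hKe : (1-P.β^2)*(324 + 2*A*P.β^2/(1-P.β^2)) = 324*(1-P.β^2) + 2*A*P.β^2 := by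
      field_simp
    rw [hKe]
    nlinarith [mul_le_mul_of_nonneg_right hA648 (sq_nonneg P.β), sq_nonneg P.β, hβ2m]
  have hLη : P.L^2*S.η^2 ≤ P.p^2/64 := by
    have h := mul_le_mul_of_nonneg_left hη2 (by positivity : (0:ℝ) ≤ P.L^2)
    have e : P.L^2*(P.p^2/(64*P.L^2*(324 + 2*A*P.β^2/(1-P.β^2))))
        = P.p^2/(64*(324 + 2*A*P.β^2/(1-P.β^2))) := by
      rw [eq_div_iff (by positivity : (64*(324 + 2*A*P.β^2/(1-P.β^2)) : ℝ) ≠ 0)]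
      field_simp
    have h2 : P.p^2/(64*(324 + 2*A*P.β^2/(1-P.β^2))) ≤ P.p^2/64 :=
      div_le_div_of_nonneg_left (sq_nonneg P.p) (by norm_num) (by nlinarith [hK1])
    rw [e] at h
    linarith
  have F1 : 16*(216+A*P.β^2)*(P.L^2*S.η^2) ≤ P.p^2*(1-P.β^2) := by
    have h1 : (216+A*P.β^2)*S.η^2
        ≤ (4*((1-P.β^2)*(324 + 2*A*P.β^2/(1-P.β^2))))
          *(P.p^2/(64*P.L^2*(324 + 2*A*P.β^2/(1-P.β^2)))) := by
      apply mul_le_mul hcK hη2 (sq_nonneg _)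
      nlinarith [mul_nonneg hβ2m.le hK0.le]
    have e1 : (4*((1-P.β^2)*(324 + 2*A*P.β^2/(1-P.β^2))))
          *(P.p^2/(64*P.L^2*(324 + 2*A*P.β^2/(1-P.β^2))))
        = P.p^2*(1-P.β^2)/(16*P.L^2) := by
      field_simp
      try ring
    rw [e1] at h1
    have h2 := mul_le_mul_of_nonneg_left h1 (by positivity : (0:ℝ) ≤ 16*P.L^2)
    have e2 : 16*P.L^2*(P.p^2*(1-P.β^2)/(16*P.L^2)) = P.p^2*(1-P.β^2) := by
      field_simp
      try ring
    rw [e2] at h2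
    nlinarith [h2]
  -- composite scalar coefficient bounds
  have hccoef : (0:ℝ) ≤ 36/P.p^2*S.η^2*(6/P.p) + A*P.β^2/P.p^3*S.η^2 := by
    have h1 : (0:ℝ) ≤ 36/P.p^2*S.η^2*(6/P.p) := by
      apply mul_nonneg (mul_nonneg (by positivity) (sq_nonneg _))
      exact div_nonneg (by norm_num) hp0.le
    have h2 : (0:ℝ) ≤ A*P.β^2/P.p^3*S.η^2 := by
      apply mul_nonneg (div_nonneg (by positivity) (by positivity)) (sq_nonneg _)
    linarith
  have hQ : (0:ℝ) ≤ 2/(1-P.β^2)*P.L^2*S.η^2 := by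
    apply mul_nonneg (mul_nonneg (div_nonneg (by norm_num) hβ2m.le) (by positivity)) (sq_nonneg _)
  have hfac : (0:ℝ) ≤ S.η^2/(P.p^3*(1-P.β^2)) :=
    div_nonneg (sq_nonneg _) (mul_nonneg (by positivity) hβ2m.le)
  have sGFs : (36/P.p^2*S.η^2*(6/P.p) + A*P.β^2/P.p^3*S.η^2)*(2/(1-P.β^2)*P.L^2*S.η^2)*2*4
      ≤ 1/P.p*S.η^2 := by
    have key : (36/P.p^2*S.η^2*(6/P.p) + A*P.β^2/P.p^3*S.η^2)*(2/(1-P.β^2)*P.L^2*S.η^2)*2*4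
        = (16*(216+A*P.β^2)*(P.L^2*S.η^2)) * (S.η^2/(P.p^3*(1-P.β^2))) := by
      field_simp
      try ring
    rw [key]
    have h := mul_le_mul_of_nonneg_right F1 hfac
    have e : P.p^2*(1-P.β^2)*(S.η^2/(P.p^3*(1-P.β^2))) = 1/P.p*S.η^2 := by
      field_simp
      try ring
    rw [e] at h
    exact h
  have hfacL : (0:ℝ) ≤ P.L^2*S.η^2/(P.p^3*(1-P.β^2)) :=
    div_nonneg (by positivity) (mul_nonneg (by positivity) hβ2m.le)
  have sX0s : (36/P.p^2*S.η^2*(6/P.p) + A*P.β^2/P.p^3*S.η^2)*(2/(1-P.β^2)*P.L^2*S.η^2)*2*(4*P.L^2)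
      ≤ P.p/2 - P.p/t := by
    have key : (36/P.p^2*S.η^2*(6/P.p) + A*P.β^2/P.p^3*S.η^2)
          *(2/(1-P.β^2)*P.L^2*S.η^2)*2*(4*P.L^2)
        = (16*(216+A*P.β^2)*(P.L^2*S.η^2)) * (P.L^2*S.η^2/(P.p^3*(1-P.β^2))) := by
      field_simp
      try ring
    rw [key]
    have h := mul_le_mul_of_nonneg_right F1 hfacL
    have e : P.p^2*(1-P.β^2)*(P.L^2*S.η^2/(P.p^3*(1-P.β^2))) = P.L^2*S.η^2/P.p := by
      field_simp
      try ring
    rw [e] at h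
    have h2 : P.L^2*S.η^2/P.p ≤ (P.p^2/64)/P.p := by
      exact div_le_div_of_nonneg_right hLη hp0.le
    have e2 : (P.p^2/64)/P.p = P.p/64 := by
      field_simp
    rw [e2] at h2
    linarith [hpt4]
  have sSigma : (36/P.p^2*S.η^2*(6/P.p) + A*P.β^2/P.p^3*S.η^2)
        *(2/(1-P.β^2)*P.L^2*S.η^2)*2*(2*P.σ^2)
      ≤ P.σ^2*S.η^2/P.p := by
    have h := mul_le_mul_of_nonneg_right sGFs (sq_nonneg P.σ)
    have hnn : (0:ℝ) ≤ P.σ^2*S.η^2/P.p :=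
      div_nonneg (mul_nonneg (sq_nonneg _) (sq_nonneg _)) hp0.le
    ring_nf at h hnn ⊢
    linarith [h, hnn]
  have sU0s : (36/P.p^2*S.η^2*(6/P.p) + A*P.β^2/P.p^3*S.η^2)
        *(2/(1-P.β^2)*P.L^2*S.η^2)*(2*P.β^2)
      ≤ (P.L^2/P.p^3)*(2592*P.β^2+16*A*P.β^4/(1-P.β^2))*S.η^4 := by
    have e : (P.L^2/P.p^3)*(2592*P.β^2+16*A*P.β^4/(1-P.β^2))*S.η^4
          - (36/P.p^2*S.η^2*(6/P.p) + A*P.β^2/P.p^3*S.η^2)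
            *(2/(1-P.β^2)*P.L^2*S.η^2)*(2*P.β^2)
        = (P.L^2*S.η^4/(P.p^3*(1-P.β^2))) * (1728*P.β^2 + (12*A-2592)*P.β^4) := by
      field_simp
      try ring
    have h1 : (0:ℝ) ≤ P.L^2*S.η^4/(P.p^3*(1-P.β^2)) :=
      div_nonneg (by positivity) (mul_nonneg (by positivity) hβ2m.le)
    have h2 : (0:ℝ) ≤ 1728*P.β^2 + (12*A-2592)*P.β^4 := by
      nlinarith [sq_nonneg P.β, sq_nonneg (P.β^2), hA648]
    nlinarith [mul_nonneg h1 h2, e]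
  have sE0s : 9/P.p*S.η^2 + 36/P.p^2*S.η^2*(1-P.p/2) ≤ (1-P.p/t)*(36/P.p^2)*S.η^2 := by
    have e : (1-P.p/t)*(36/P.p^2)*S.η^2 - (9/P.p*S.η^2 + 36/P.p^2*S.η^2*(1-P.p/2))
        = 9*S.η^2*(t-4)/(P.p*t) := by
      field_simp
      try ring
    have h1 : (0:ℝ) ≤ 9*S.η^2*(t-4)/(P.p*t) :=
      div_nonneg (mul_nonneg (mul_nonneg (by norm_num) (sq_nonneg _)) (by linarith))
        (mul_nonneg hp0.le ht0.le)
    linarith [e.ge, e.le, h1]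
  have sD0s : (36/P.p^2*S.η^2*(6/P.p) + A*P.β^2/P.p^3*S.η^2)*(2*P.β^2/(1+P.β^2))
      ≤ (1-P.p/t)*(A*P.β^2/P.p^3)*S.η^2 := by
    rw [hmt]
    have e : (648/A + 2*P.β^2/(1+P.β^2))*(A*P.β^2/P.p^3)*S.η^2
          - (36/P.p^2*S.η^2*(6/P.p) + A*P.β^2/P.p^3*S.η^2)*(2*P.β^2/(1+P.β^2))
        = (P.β^2*S.η^2/(P.p^3*(1+P.β^2))) * (216 + 648*P.β^2) := by
      field_simp
      try ring
    have h1 : (0:ℝ) ≤ (P.β^2*S.η^2/(P.p^3*(1+P.β^2))) * (216 + 648*P.β^2) := by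
      apply mul_nonneg
      · exact div_nonneg (mul_nonneg (sq_nonneg _) (sq_nonneg _))
          (mul_nonneg (by positivity) hβ2p.le)
      · nlinarith [sq_nonneg P.β]
    linarith [e.ge, e.le, h1]
  -- quantity facts
  have hX0nn : 0 ≤ S.Xi r := by
    apply mul_nonneg (by positivity)
    exact integral_nonneg (fun ω => Finset.sum_nonneg (fun i _ => sq_nonneg _))
  have hE0nn : 0 ≤ S.EE r := by
    apply mul_nonneg (by positivity)
    exact integral_nonneg (fun ω => Finset.sum_nonneg (fun i _ => sq_nonneg _))
  have hD0nn : 0 ≤ S.DD r := by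
    apply mul_nonneg (by positivity)
    exact integral_nonneg (fun ω => Finset.sum_nonneg (fun i _ => sq_nonneg _))
  have hU0nn : 0 ≤ ∫ ω, ‖S.ubar r ω‖^2 ∂P.μ :=
    integral_nonneg (fun ω => sq_nonneg _)
  have hGFnn : 0 ≤ ∫ ω, ‖P.gradF (S.xbar r ω)‖^2 ∂P.μ :=
    integral_nonneg (fun ω => sq_nonneg _)
  -- recursion inequalities
  have hR1 := S.rec_Xi r
  have hR2 := S.rec_EE r
  have hR3 := S.rec_DD r
  have hR4 := S.rec_ubar r
  have hR5 := S.rec_g r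
  -- weaken σ²/N to σ²
  have hR5' : ∫ ω, ‖(N:ℝ)⁻¹ • ∑ i, S.G r i ω‖^2 ∂P.μ
      ≤ 2*P.σ^2 + 4 * (∫ ω, ‖P.gradF (S.xbar r ω)‖^2 ∂P.μ) + 4*P.L^2 * S.Xi r := by
    have hσ : P.σ^2/(N:ℝ) ≤ P.σ^2 := by
      apply div_le_self (sq_nonneg _) hN1
    linarith [hR5]
  -- scaled versions
  have h2' := mul_le_mul_of_nonneg_left hR2
    (by positivity : (0:ℝ) ≤ 36/P.p^2*S.η^2)
  have hD' := mul_le_mul_of_nonneg_left hR3 hccoef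
  have hU' := mul_le_mul_of_nonneg_left hR4
    (mul_nonneg hccoef hQ)
  have hG' := mul_le_mul_of_nonneg_left hR5'
    (mul_nonneg (mul_nonneg hccoef hQ) (by norm_num : (0:ℝ) ≤ 2))
  -- quantity-scaled coefficient facts
  have mX0 := mul_le_mul_of_nonneg_right sX0s hX0nn
  have mE0 := mul_le_mul_of_nonneg_right sE0s hE0nn
  have mD0 := mul_le_mul_of_nonneg_right sD0s hD0nn
  have mU0 := mul_le_mul_of_nonneg_right sU0s hU0nn
  have mGF := mul_le_mul_of_nonneg_right sGFs hGFnn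
  -- denominator normalizations
  have eUD : 9/P.p*S.η^2*((N:ℝ)⁻¹ * ∫ ω, (∑ i, ‖S.u (r+1) i ω - S.dseq (r+1) i ω‖^2) ∂P.μ)
        + 36/P.p^2*S.η^2*(24/P.p*((N:ℝ)⁻¹ * ∫ ω, (∑ i, ‖S.u (r+1) i ω
            - S.dseq (r+1) i ω‖^2) ∂P.μ))
      = 1/((N:ℝ)*P.p)*(9+864/P.p^2)*S.η^2
          * ∫ ω, (∑ i, ‖S.u (r+1) i ω - S.dseq (r+1) i ω‖^2) ∂P.μ := by
    field_simp
    ring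
  have eIE : 9/P.p*S.η^2*((N:ℝ)⁻¹ * ∫ ω, (∑ i, ‖S.eseq (r+1) i ω‖^2) ∂P.μ)
      = 9/((N:ℝ)*P.p)*S.η^2 * ∫ ω, (∑ i, ‖S.eseq (r+1) i ω‖^2) ∂P.μ := by
    field_simp
  ring_nf at hR1 h2' hD' hU' hG' mX0 mE0 mD0 mU0 mGF sSigma eUD eIE ⊢
  linarith [hR1, h2', hD', hU', hG', mX0, mE0, mD0, mU0, mGF, sSigma, eUD, eIE]
end
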